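/- arXiv:2212.03949 — 4 statements merged into one kernel-verified Lean document; each statement's English description precedes it below -/
import Mathlib

section
/- Every CL-labeling of a finite bounded poset P has the unique earliest (UE) property. -/
/-- `l` is a saturated chain from `x` to `y` in the poset `α`:
a list `x = x₀ ⋖ x₁ ⋖ ⋯ ⋖ x_k = y` of elements, each covered by the next. -/
def SatChain {α : Type*} [PartialOrder α] (x y : α) (l : List α) : Prop :=
  l.Chain' (· ⋖ ·) ∧ l.head? = some x ∧ l.getLast? = some y

/-- The label sequence of a saturated chain, read from bottom to top.  Here
`lab r x y` is the label of the cover relation `x ⋖ y` with respect to the root `r`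
(a saturated chain from `⊥` to `x` recorded as a list ending in `x`); this encodes a
chain-edge (CE-) labeling.  The first list argument is the root of the head of the
chain, the second is the chain itself. -/
def labelSeq {α Q : Type*} (lab : List α → α → α → Q) : List α → List α → List Q
  | _, [] => []
  | _, [_] => []
  | r, x :: y :: c => lab r x y :: labelSeq lab (r ++ [y]) (y :: c)

/-- `u ⋖ v ⋖ w` is a topological ascent with respect to the root `r`: the label
sequence of `u ⋖ v ⋖ w` is lexicographically strictly smaller than that of every
other saturated chain from `u` to `w`. -/
def TopAscent {α Q : Type*} [PartialOrder α] [LinearOrder Q]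
    (lab : List α → α → α → Q) (r : List α) (u v w : α) : Prop :=
  u ⋖ v ∧ v ⋖ w ∧ ∀ c, SatChain u w c → c ≠ [u, v, w] →
    List.Lex (· < ·) (labelSeq lab r [u, v, w]) (labelSeq lab r c)

/-- The saturated chain (second argument) is topologically ascending with respect to
the root given as first argument: every consecutive triple on it is a topological
ascent (with respect to the appropriately extended root). -/
def TopAscending {α Q : Type*} [PartialOrder α] [LinearOrder Q]
    (lab : List α → α → α → Q) : List α → List α → Prop
  | r, u :: v :: w :: c => TopAscent lab r u v w ∧ TopAscending lab (r ++ [v]) (v :: w :: c)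
  | _, _ => True

/-- `lab` is a CC-labeling: every rooted interval `[u,v]_r` has exactly one
topologically ascending saturated chain, distinct saturated chains of `[u,v]_r` have
distinct label sequences, and no label sequence is a prefix of another. -/
def IsCCLabeling {α Q : Type*} [PartialOrder α] [OrderBot α] [LinearOrder Q]
    (lab : List α → α → α → Q) : Prop :=
  ∀ u v r, SatChain (⊥ : α) u r → u ≤ v →
    (∃! c, SatChain u v c ∧ TopAscending lab r c) ∧
    (∀ c c', SatChain u v c → SatChain u v c' → c ≠ c' →
      labelSeq lab r c ≠ labelSeq lab r c' ∧
      ¬ labelSeq lab r c <+: labelSeq lab r c')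

/-- `lab` is a CL-labeling: every rooted interval `[u,v]_r` has exactly one saturated
chain with strictly increasing label sequence, and this label sequence is
lexicographically strictly smaller than that of every other saturated chain. -/
def IsCLLabeling {α Q : Type*} [PartialOrder α] [OrderBot α] [LinearOrder Q]
    (lab : List α → α → α → Q) : Prop :=
  ∀ u v r, SatChain (⊥ : α) u r → u ≤ v →
    ∃ c, SatChain u v c ∧ List.Chain' (· < ·) (labelSeq lab r c) ∧
      (∀ c', SatChain u v c' → List.Chain' (· < ·) (labelSeq lab r c') → c' = c) ∧
      (∀ c', SatChain u v c' → c' ≠ c →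
        List.Lex (· < ·) (labelSeq lab r c) (labelSeq lab r c'))

/-- `lab` is a topological CL-labeling: every rooted interval `[u,v]_r` has a unique
saturated chain with lexicographically smallest label sequence, and every other
saturated chain of `[u,v]_r` contains at least one topological descent (i.e. is not
topologically ascending). -/
def IsTopolCLLabeling {α Q : Type*} [PartialOrder α] [OrderBot α] [LinearOrder Q]
    (lab : List α → α → α → Q) : Prop :=
  ∀ u v r, SatChain (⊥ : α) u r → u ≤ v →
    ∃ c, SatChain u v c ∧
      (∀ c', SatChain u v c' → c' ≠ c →
        List.Lex (· < ·) (labelSeq lab r c) (labelSeq lab r c')) ∧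
      (∀ c', SatChain u v c' → c' ≠ c → ¬ TopAscending lab r c')

/-- `lab` has the unique earliest (UE) property: in each rooted interval `[u,v]_r`,
the smallest label on the cover relations upward from `u` occurs on only one such
cover relation. -/
def HasUE {α Q : Type*} [PartialOrder α] [OrderBot α] [LinearOrder Q]
    (lab : List α → α → α → Q) : Prop :=
  ∀ u v r, SatChain (⊥ : α) u r → u ≤ v →
    ∀ a b, u ⋖ a → a ≤ v → u ⋖ b → b ≤ v →
      (∀ a', u ⋖ a' → a' ≤ v → lab r u a ≤ lab r u a') →
      (∀ a', u ⋖ a' → a' ≤ v → lab r u b ≤ lab r u a') → a = b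

/-- `lab` is self-consistent: whenever `c₀` is the lexicographically strictly first
saturated chain of a rooted interval `[u,v]_r`, with `a` the atom on `c₀` and
`b ≠ a` another atom of `[u,v]_r`, then for every `v'` above both `a` and `b`, every
saturated chain of `[u,v']_r` through `b` is lexicographically later than every
saturated chain of `[u,v']_r` through `a`. -/
def SelfConsistent {α Q : Type*} [PartialOrder α] [OrderBot α] [LinearOrder Q]
    (lab : List α → α → α → Q) : Prop :=
  ∀ u v r, SatChain (⊥ : α) u r → ∀ c₀, SatChain u v c₀ →
    (∀ c, SatChain u v c → c ≠ c₀ →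
      List.Lex (· < ·) (labelSeq lab r c₀) (labelSeq lab r c)) →
    ∀ a, u ⋖ a → a ∈ c₀ →
    ∀ b, u ⋖ b → b ≤ v → b ≠ a →
    ∀ v', a ≤ v' → b ≤ v' →
    ∀ ca cb, SatChain u v' ca → a ∈ ca → SatChain u v' cb → b ∈ cb →
      List.Lex (· < ·) (labelSeq lab r ca) (labelSeq lab r cb)

lemma lex_cons_cases' {Q : Type*} [LinearOrder Q] {a b : Q} {l l' : List Q}
    (h : List.Lex (· < ·) (a :: l) (b :: l')) :
    a < b ∨ (a = b ∧ List.Lex (· < ·) l l') := by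
  cases h with
  | cons h => exact Or.inr ⟨rfl, h⟩
  | rel h => exact Or.inl h

lemma satChain_le' {α : Type*} [PartialOrder α] :
    ∀ {l : List α} {x y : α}, SatChain x y l → x ≤ y := by
  intro l
  induction l with
  | nil => intro x y h; simp [SatChain] at h
  | cons z ls ih =>
    intro x y h
    obtain ⟨hc, hh, hl⟩ := h
    simp at hh; subst hh
    cases ls with
    | nil => simp at hl; subst hl; rfl
    | cons w ls' =>
      simp only [List.Chain', List.isChain_cons_cons] at hc
      rw [List.getLast?_cons_cons] at hl
      exact hc.1.le.trans (ih ⟨hc.2, rfl, hl⟩)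

/-- Every CL-labeling of a finite bounded poset has the unique earliest (UE)
property. -/
theorem stmt_13 {α Q : Type*} [PartialOrder α] [BoundedOrder α] [Fintype α]
    [LinearOrder Q] (lab : List α → α → α → Q) (hcl : IsCLLabeling lab) :
    HasUE lab := by
  intro u v r hr huv a b hua hav hub hbv hma hmb
  obtain ⟨c₀, hc₀, hinc, huniq, hlex⟩ := hcl u v r hr huv
  have huv' : u < v := lt_of_lt_of_le hua.lt hav
  -- c₀ has at least two elements
  obtain ⟨a₀, rest, rfl⟩ : ∃ a₀ rest, c₀ = u :: a₀ :: rest := by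
    rcases c₀ with _ | ⟨x, _ | ⟨a₀, rest⟩⟩
    · simp [SatChain] at hc₀
    · obtain ⟨_, hh, hl⟩ := hc₀
      simp at hh hl
      exact absurd (hh.symm.trans hl) huv'.ne
    · obtain ⟨_, hh, _⟩ := hc₀
      simp at hh
      exact ⟨a₀, rest, by rw [hh]⟩
  have hua₀ : u ⋖ a₀ := (List.isChain_cons_cons.mp hc₀.1).1
  have hca₀ : SatChain a₀ v (a₀ :: rest) :=
    ⟨(List.isChain_cons_cons.mp hc₀.1).2, rfl, by
      have := hc₀.2.2; rwa [List.getLast?_cons_cons] at this⟩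
  have ha₀v : a₀ ≤ v := satChain_le' hca₀
  suffices key : ∀ b, u ⋖ b → b ≤ v →
      (∀ a', u ⋖ a' → a' ≤ v → lab r u b ≤ lab r u a') → b = a₀ by
    rw [key a hua hav hma, key b hub hbv hmb]
  clear hma hmb hua hav hub hbv a b
  intro b hub hbv hmin
  by_contra hne
  -- rest is nonempty, i.e. a₀ ≠ v
  obtain ⟨x₂, rest', rfl⟩ : ∃ x₂ rest', rest = x₂ :: rest' := by
    rcases rest with _ | ⟨x₂, rest'⟩
    · exfalso
      have : a₀ = v := by have := hc₀.2.2; simpa using this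
      subst this
      exact hua₀.2 hub.lt (lt_of_le_of_ne hbv hne)
    · exact ⟨x₂, rest', rfl⟩
  -- the unique increasing chain of [b, v] with root r ++ [b]
  have hrb : SatChain (⊥ : α) b (r ++ [b]) := by
    obtain ⟨hrc, hrh, hrl⟩ := hr
    refine ⟨List.isChain_append.mpr ⟨hrc, List.isChain_singleton b, ?_⟩, ?_, ?_⟩
    · intro x hx y hy
      simp at hy; subst hy
      rw [hrl] at hx; simp at hx; subst hx; exact hub
    · rcases r with _ | ⟨z, r'⟩
      · simp at hrh
      · simpa using hrh
    · exact List.getLast?_concat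
  obtain ⟨d, hd, hdinc, -, -⟩ := hcl b v (r ++ [b]) hrb hbv
  obtain ⟨d'', rfl⟩ : ∃ d'', d = b :: d'' := by
    rcases d with _ | ⟨z, d''⟩
    · simp [SatChain] at hd
    · have := hd.2.1; simp at this; subst this; exact ⟨d'', rfl⟩
  -- the chain u :: b :: d'' from u to v
  have hc' : SatChain u v (u :: b :: d'') :=
    ⟨List.isChain_cons_cons.mpr ⟨hub, hd.1⟩, rfl, by
      rw [List.getLast?_cons_cons]; exact hd.2.2⟩
  have hne' : (u :: b :: d'') ≠ u :: a₀ :: x₂ :: rest' := by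
    intro h
    exact hne (by injection (by injection h : b :: d'' = a₀ :: x₂ :: rest'))
  have hlex' := hlex _ hc' hne'
  rw [show labelSeq lab r (u :: a₀ :: x₂ :: rest') =
      lab r u a₀ :: labelSeq lab (r ++ [a₀]) (a₀ :: x₂ :: rest') from rfl,
    show labelSeq lab r (u :: b :: d'') =
      lab r u b :: labelSeq lab (r ++ [b]) (b :: d'') from rfl] at hlex'
  have hmla : lab r u b ≤ lab r u a₀ := hmin a₀ hua₀ ha₀v
  -- from lex-firstness, the heads are equal and the tails compare
  obtain ⟨hla, htail⟩ : lab r u a₀ = lab r u b ∧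
      List.Lex (· < ·) (labelSeq lab (r ++ [a₀]) (a₀ :: x₂ :: rest'))
        (labelSeq lab (r ++ [b]) (b :: d'')) := by
    rcases lex_cons_cases' hlex' with h | h
    · exact absurd hmla (not_le_of_gt h)
    · exact h
  -- the labels on c₀ after the first are all > lab r u b
  have hmt : lab r u b < lab (r ++ [a₀]) a₀ x₂ := by
    have := hinc
    rw [show labelSeq lab r (u :: a₀ :: x₂ :: rest') =
      lab r u a₀ :: lab (r ++ [a₀]) a₀ x₂ ::
        labelSeq lab (r ++ [a₀] ++ [x₂]) (x₂ :: rest') from rfl] at this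
    rw [hla] at this
    exact (List.isChain_cons_cons.mp this).1
  -- d'' must be nonempty and compare the first labels
  rcases d'' with _ | ⟨y, d₃⟩
  · rw [show labelSeq lab (r ++ [a₀]) (a₀ :: x₂ :: rest') =
      lab (r ++ [a₀]) a₀ x₂ ::
        labelSeq lab (r ++ [a₀] ++ [x₂]) (x₂ :: rest') from rfl,
      show labelSeq lab (r ++ [b]) [b] = [] from rfl] at htail
    exact List.not_lex_nil htail
  rw [show labelSeq lab (r ++ [a₀]) (a₀ :: x₂ :: rest') =
      lab (r ++ [a₀]) a₀ x₂ ::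
        labelSeq lab (r ++ [a₀] ++ [x₂]) (x₂ :: rest') from rfl,
    show labelSeq lab (r ++ [b]) (b :: y :: d₃) =
      lab (r ++ [b]) b y ::
        labelSeq lab (r ++ [b] ++ [y]) (y :: d₃) from rfl] at htail
  have hts : lab (r ++ [a₀]) a₀ x₂ ≤ lab (r ++ [b]) b y := by
    rcases lex_cons_cases' htail with h | h
    · exact h.le
    · exact h.1.le
  by_cases hms : lab r u b < lab (r ++ [b]) b y
  · -- then u :: b :: y :: d₃ is increasing, contradicting uniqueness
    have hinc' : List.Chain' (· < ·) (labelSeq lab r (u :: b :: y :: d₃)) := by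
      rw [show labelSeq lab r (u :: b :: y :: d₃) =
        lab r u b :: labelSeq lab (r ++ [b]) (b :: y :: d₃) from rfl]
      exact List.isChain_cons.mpr ⟨by
        intro q hq
        rw [show labelSeq lab (r ++ [b]) (b :: y :: d₃) =
          lab (r ++ [b]) b y ::
            labelSeq lab (r ++ [b] ++ [y]) (y :: d₃) from rfl] at hq
        simp at hq; subst hq; exact hms, hdinc⟩
    have := huniq _ hc' hinc'
    exact hne' this
  · push_neg at hms
    exact lt_irrefl _ (hts.trans_lt (hms.trans_lt hmt))
end

section
/- Every CC-labeling of a finite bounded poset P is a topological CL-labeling of P. Moreover, the converse fails: there exists a finite bounded poset with a topological CL-labeling that is not a CC-labeling. -/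
set_option linter.unusedSectionVars false
set_option linter.constructorNameAsVariable false

section Lemmas
variable {α Q : Type*} [PartialOrder α] [LinearOrder Q] (lab : List α → α → α → Q)

lemma satChain_shape {x y : α} {l : List α} (h : SatChain x y l) : ∃ t, l = x :: t := by
  cases l with
  | nil => simp [SatChain] at h
  | cons a t => exact ⟨t, by obtain ⟨-, h2, -⟩ := h; simp at h2; rw [h2]⟩

lemma labelSeq_prefix (r c e : List α) :
    labelSeq lab r c <+: labelSeq lab r (c ++ e) := by
  induction c generalizing r with
  | nil => simp [labelSeq]
  | cons x c ih =>
    cases c with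
    | nil => simp [labelSeq]
    | cons y c' =>
      show (lab r x y :: _) <+: (lab r x y :: _)
      exact List.cons_prefix_cons.2 ⟨rfl, ih (r ++ [y])⟩

lemma lex_extend {s t s' w : List Q} (h : List.Lex (· < ·) s t) (hnp : ¬ s <+: t)
    (hs : s <+: s') : List.Lex (· < ·) s' (t ++ w) := by
  induction h generalizing s' with
  | nil => exact absurd (List.nil_prefix) hnp
  | @rel a l₁ b l₂ hab =>
    obtain ⟨u, rfl⟩ := hs
    exact List.Lex.rel hab
  | @cons a l₁ l₂ h ih =>
    obtain ⟨u, rfl⟩ := hs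
    have hnp' : ¬ l₁ <+: l₂ := fun hp => hnp (List.cons_prefix_cons.2 ⟨rfl, hp⟩)
    exact List.Lex.cons (ih hnp' (List.prefix_append _ _))

lemma lex_trichotomy {s t : List Q} (h : s ≠ t) :
    List.Lex (· < ·) s t ∨ List.Lex (· < ·) t s := by
  rcases @trichotomous _ (List.Lex (· < ·)) _ s t with h' | h' | h'
  · exact Or.inl h'
  · exact absurd h' h
  · exact Or.inr h'

lemma exists_satChain [Fintype α] (v : α) : ∀ u : α, u ≤ v → ∃ c, SatChain u v c := by
  have wf := (wellFounded_gt : WellFounded ((· > ·) : α → α → Prop))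
  intro u
  refine WellFounded.induction wf (C := fun u => u ≤ v → ∃ c, SatChain u v c) u ?_
  intro u IH hu
  rcases eq_or_lt_of_le hu with rfl | hlt
  · exact ⟨[u], List.isChain_singleton u, rfl, rfl⟩
  · obtain ⟨y, hy, hyv⟩ := hlt.exists_covby_le
    obtain ⟨c, hc⟩ := IH y hy.lt hyv
    obtain ⟨t, rfl⟩ := satChain_shape hc
    obtain ⟨hc1, hc2, hc3⟩ := hc
    exact ⟨u :: y :: t, List.isChain_cons_cons.2 ⟨hy, hc1⟩, rfl, hc3⟩

lemma satChain_finite [Fintype α] (u v : α) : {c : List α | SatChain u v c}.Finite := by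
  apply (List.finite_length_le α (Fintype.card α)).subset
  intro c hc
  have hlt : c.Chain' (· < ·) := List.IsChain.imp (fun a b h => h.lt) hc.1
  have : c.Nodup := (List.isChain_iff_pairwise.1 hlt).imp ne_of_lt
  exact this.length_le_card

lemma exists_least [Fintype α] (r : List α) (u v : α) (hne : ∃ c, SatChain u v c) :
    ∃ m, SatChain u v m ∧ ∀ c, SatChain u v c →
      ¬ List.Lex (· < ·) (labelSeq lab r c) (labelSeq lab r m) := by
  obtain ⟨m, hm, hmin⟩ := Set.exists_min_image _ (fun c => labelSeq lab r c)
    (satChain_finite u v) hne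
  refine ⟨m, hm, fun c hc hlex => ?_⟩
  have h1 : labelSeq lab r m ≤ labelSeq lab r c := hmin c hc
  have h2 : labelSeq lab r c < labelSeq lab r m := hlex
  exact absurd h1 (not_le_of_gt h2)

variable [OrderBot α]

lemma ascending_of_least (hCC : IsCCLabeling lab) (v : α) :
    ∀ (m : List α) (u : α) (r : List α), SatChain (⊥ : α) u r → SatChain u v m →
      (∀ c, SatChain u v c →
        ¬ List.Lex (· < ·) (labelSeq lab r c) (labelSeq lab r m)) →
      TopAscending lab r m := by
  intro m
  induction m with
  | nil => intro u r _ _ _; trivial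
  | cons u0 t ih =>
    match t, ih with
    | [], _ => intro u r _ _ _; trivial
    | [y], _ => intro u r _ _ _; trivial
    | y :: z :: t3, ih =>
      intro u r hr hm hle
      obtain ⟨t', ht'⟩ := satChain_shape hm
      have hu0 : u0 = u := by injection ht'
      subst hu0
      have hchain := hm.1
      have huy : u0 ⋖ y := (List.isChain_cons_cons.1 hchain).1
      have hyz : y ⋖ z := (List.isChain_cons_cons.1 (List.isChain_cons_cons.1 hchain).2).1
      have hry : SatChain (⊥ : α) y (r ++ [y]) := by
        obtain ⟨rt, hrt⟩ := satChain_shape hr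
        refine ⟨?_, ?_, ?_⟩
        · apply List.IsChain.append hr.1 (List.isChain_singleton y)
          intro a ha b hb
          simp at hb
          subst hb
          have : a = u0 := by
            have := hr.2.2
            rw [ha] at this; injection this
          rw [this]; exact huy
        · rw [hrt]; rfl
        · simp
      constructor
      · -- TopAscent lab r u0 y z
        refine ⟨huy, hyz, ?_⟩
        intro d hd hdne
        have huz : u0 ≤ z := (huy.lt.trans hyz.lt).le
        have hsat_uyz : SatChain u0 z [u0, y, z] := by
          exact ⟨List.isChain_cons_cons.2 ⟨huy, List.isChain_pair.2 hyz⟩, rfl, rfl⟩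
        have hCC2 := (hCC u0 z r hr huz).2
        have h2 := hCC2 d [u0, y, z] hd hsat_uyz hdne
        by_contra hnlex
        have hdl : List.Lex (· < ·) (labelSeq lab r d) (labelSeq lab r [u0, y, z]) := by
          rcases lex_trichotomy (Ne.symm (hCC2 [u0, y, z] d hsat_uyz hd (Ne.symm hdne)).1) with h' | h'
          · exact h'
          · exact absurd h' hnlex
        -- splice
        have hchain3 : (z :: t3).Chain' (· ⋖ ·) :=
          (List.isChain_cons_cons.1 (List.isChain_cons_cons.1 hchain).2).2
        have hd'sat : SatChain u0 v (d ++ t3) := by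
          obtain ⟨dt, rfl⟩ := satChain_shape hd
          refine ⟨?_, ?_, ?_⟩
          · apply List.IsChain.append hd.1 hchain3.tail
            intro a ha b hb
            have haz : a = z := by
              have := hd.2.2; rw [ha] at this; injection this
            subst haz
            cases t3 with
            | nil => simp at hb
            | cons w t4 =>
              simp at hb; subst hb
              exact (List.isChain_cons_cons.1 hchain3).1
          · rfl
          · cases t3 with
            | nil =>
              simp only [List.append_nil]
              have hlast : (u0 :: y :: z :: ([] : List α)).getLast? = some v := hm.2.2
              simp at hlast
              rw [hd.2.2, hlast]
            | cons w t4 =>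
              have h3 := hm.2.2
              rw [show (u0 :: y :: z :: w :: t4).getLast? = (w :: t4).getLast? from rfl] at h3
              rw [show u0 :: dt ++ w :: t4 = (u0 :: dt) ++ (w :: t4) from rfl,
                List.getLast?_append_cons, h3]
        apply hle (d ++ t3) hd'sat
        have hdec : labelSeq lab r (u0 :: y :: z :: t3)
            = labelSeq lab r [u0, y, z] ++ labelSeq lab ((r ++ [y]) ++ [z]) (z :: t3) := by
          show lab r u0 y :: lab (r ++ [y]) y z :: labelSeq lab ((r ++ [y]) ++ [z]) (z :: t3)
            = _
          rfl
        rw [hdec]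
        exact lex_extend hdl h2.2 (labelSeq_prefix lab r d t3)
      · -- recurse
        apply ih y (r ++ [y]) hry
        · exact ⟨(List.isChain_cons_cons.1 hchain).2, rfl, hm.2.2⟩
        · intro c hc hLex
          obtain ⟨c2, rfl⟩ := satChain_shape hc
          have hsat : SatChain u0 v (u0 :: y :: c2) :=
            ⟨List.isChain_cons_cons.2 ⟨huy, hc.1⟩, rfl, by
              rw [show (u0 :: y :: c2).getLast? = (y :: c2).getLast? from rfl]; exact hc.2.2⟩
          apply hle (u0 :: y :: c2) hsat
          exact List.Lex.cons hLex

end Lemmas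


inductive P6 : Type
  | o | a | a' | x | b | t
  deriving DecidableEq

instance : Fintype P6 :=
  ⟨[P6.o, P6.a, P6.a', P6.x, P6.b, P6.t].toFinset, fun v => by cases v <;> decide⟩

namespace P6

def ple : P6 → P6 → Bool
  | u, v =>
    u = v || u = o || v = t || ((u = a || u = a') && v = b)

instance : LE P6 := ⟨fun u v => ple u v = true⟩
instance : LT P6 := ⟨fun u v => ple u v = true ∧ ¬ ple v u = true⟩

instance decLE : DecidableRel ((· ≤ ·) : P6 → P6 → Prop) := fun u v =>
  inferInstanceAs (Decidable (ple u v = true))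
instance decLT : DecidableRel ((· < ·) : P6 → P6 → Prop) := fun _ _ =>
  instDecidableAnd

instance : PartialOrder P6 where
  le_refl := by decide
  le_trans := by decide
  le_antisymm := by decide
  lt_iff_le_not_ge := by decide

instance : BoundedOrder P6 where
  top := t
  le_top := by decide
  bot := o
  bot_le := by decide

instance decCov : DecidableRel ((· ⋖ ·) : P6 → P6 → Prop) := fun u v =>
  decidable_of_iff (u < v ∧ ∀ z, u < z → ¬ z < v)
    ⟨fun h => ⟨h.1, fun _ hz => h.2 _ hz⟩, fun h => ⟨h.1, fun _ hz => h.2 hz⟩⟩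

def chainB (l : List P6) : Bool := (l.zip l.tail).all fun p => decide (p.1 ⋖ p.2)

lemma chain_iff : ∀ l : List P6, l.Chain' (· ⋖ ·) ↔ chainB l = true := by
  intro l
  induction l with
  | nil => simp [chainB, List.Chain']
  | cons u l ih =>
    cases l with
    | nil => simp [chainB, List.Chain']
    | cons v l' =>
      rw [show List.Chain' (· ⋖ ·) (u :: v :: l') ↔ u ⋖ v ∧ List.Chain' (· ⋖ ·) (v :: l') from
        List.isChain_cons_cons, ih]
      show _ ↔ (decide (u ⋖ v) && chainB (v :: l')) = true
      simp

instance decSat (u v : P6) (c : List P6) : Decidable (SatChain u v c) :=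
  decidable_of_iff (chainB c = true ∧ c.head? = some u ∧ c.getLast? = some v)
    (and_congr (chain_iff c).symm Iff.rfl)

def allPaths : List (List P6) :=
  [[], [o], [a], [a'], [x], [b], [t],
   [o,a], [o,a'], [o,x], [a,b], [a',b], [x,t], [b,t],
   [o,a,b], [o,a',b], [o,x,t], [a,b,t], [a',b,t],
   [o,a,b,t], [o,a',b,t]]

lemma mem_allPaths : ∀ c : List P6, c.Chain' (· ⋖ ·) → c ∈ allPaths := by
  intro c hc
  induction c with
  | nil => decide
  | cons u s ih =>
    cases s with
    | nil => cases u <;> decide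
    | cons w s' =>
      have h1 : u ⋖ w := (List.isChain_cons_cons.1 hc).1
      have h2 : (w :: s') ∈ allPaths := ih (List.isChain_cons_cons.1 hc).2
      clear hc ih
      simp only [allPaths, List.mem_cons, List.not_mem_nil, or_false] at h2
      rcases h2 with h|h|h|h|h|h|h|h|h|h|h|h|h|h|h|h|h|h|h|h|h <;>
      first
        | exact absurd h (List.cons_ne_nil _ _)
        | (obtain ⟨rfl, rfl⟩ := List.cons_eq_cons.1 h
           revert h1
           cases u <;> decide)

def g : P6 → P6 → ℕ
  | o, a => 1
  | o, x => 1
  | _, _ => 0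

def lab : List P6 → P6 → P6 → ℕ := fun _ u v => g u v

def seqg (l : List P6) : List ℕ := (l.zip l.tail).map fun p => g p.1 p.2

lemma labelSeq_eq : ∀ (c r : List P6), labelSeq lab r c = seqg c := by
  intro c
  induction c with
  | nil => intro r; rfl
  | cons x c ih =>
    cases c with
    | nil => intro r; rfl
    | cons y c' =>
      intro r
      show g x y :: labelSeq lab (r ++ [y]) (y :: c') = _
      rw [ih]
      rfl

lemma notasc1 (r : List P6) : ¬ TopAscending lab r [o, a, b, t] := by
  intro h
  have h1 : TopAscent lab r o a b := h.1
  have h2 := h1.2.2 [o, a', b] (by decide) (by decide)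
  rw [labelSeq_eq, labelSeq_eq] at h2
  exact absurd h2 (by decide)

lemma notasc2 (r : List P6) : ¬ TopAscending lab r [o, x, t] := by
  intro h
  have h1 : TopAscent lab r o x t := h.1
  have h2 := h1.2.2 [o, a', b, t] (by decide) (by decide)
  rw [labelSeq_eq, labelSeq_eq] at h2
  exact absurd h2 (by decide)

lemma notasc3 (r : List P6) : ¬ TopAscending lab r [o, a, b] := by
  intro h
  have h1 : TopAscent lab r o a b := h.1
  have h2 := h1.2.2 [o, a', b] (by decide) (by decide)
  rw [labelSeq_eq, labelSeq_eq] at h2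
  exact absurd h2 (by decide)

lemma uniq_interval (r : List P6) {u v : P6} (c : List P6) (hc : SatChain u v c)
    (huniq : ∀ c', SatChain u v c' → c' = c) :
    ∃ c0, SatChain u v c0 ∧
      (∀ c', SatChain u v c' → c' ≠ c0 →
        List.Lex (· < ·) (labelSeq lab r c0) (labelSeq lab r c')) ∧
      (∀ c', SatChain u v c' → c' ≠ c0 → ¬ TopAscending lab r c') :=
  ⟨c, hc, fun c' h hne => absurd (huniq c' h) hne, fun c' h hne _ => hne (huniq c' h)⟩

theorem topolCL : IsTopolCLLabeling lab := by
  intro u v r hr huv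
  clear hr
  cases u <;> cases v <;> first
    | exact absurd huv (by decide)
    | -- interval [o,b]
      (refine ⟨[P6.o, P6.a', P6.b], by decide, ?_, ?_⟩
       · intro c' h hne
         have h1 := mem_allPaths c' h.1
         have h2 := h.2.1; have h3 := h.2.2
         rw [labelSeq_eq, labelSeq_eq]
         fin_cases h1 <;> revert h2 h3 hne <;> decide
       · intro c' h hne
         have h1 := mem_allPaths c' h.1
         have h2 := h.2.1; have h3 := h.2.2
         fin_cases h1 <;> first
           | exact absurd h2 (by decide)
           | exact absurd h3 (by decide)
           | exact absurd rfl hne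
           | exact notasc3 r)
    | -- interval [o,t]
      (refine ⟨[P6.o, P6.a', P6.b, P6.t], by decide, ?_, ?_⟩
       · intro c' h hne
         have h1 := mem_allPaths c' h.1
         have h2 := h.2.1; have h3 := h.2.2
         rw [labelSeq_eq, labelSeq_eq]
         fin_cases h1 <;> revert h2 h3 hne <;> decide
       · intro c' h hne
         have h1 := mem_allPaths c' h.1
         have h2 := h.2.1; have h3 := h.2.2
         fin_cases h1 <;> first
           | exact absurd h2 (by decide)
           | exact absurd h3 (by decide)
           | exact absurd rfl hne
           | exact notasc1 r
           | exact notasc2 r)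
    | exact uniq_interval r [P6.o] (by decide)
        (by intro c' h
            have h1 := mem_allPaths c' h.1
            have h2 := h.2.1; have h3 := h.2.2
            fin_cases h1 <;> revert h2 h3 <;> decide)
    | exact uniq_interval r [P6.o, P6.a] (by decide)
        (by intro c' h
            have h1 := mem_allPaths c' h.1
            have h2 := h.2.1; have h3 := h.2.2
            fin_cases h1 <;> revert h2 h3 <;> decide)
    | exact uniq_interval r [P6.o, P6.a'] (by decide)
        (by intro c' h
            have h1 := mem_allPaths c' h.1
            have h2 := h.2.1; have h3 := h.2.2
            fin_cases h1 <;> revert h2 h3 <;> decide)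
    | exact uniq_interval r [P6.o, P6.x] (by decide)
        (by intro c' h
            have h1 := mem_allPaths c' h.1
            have h2 := h.2.1; have h3 := h.2.2
            fin_cases h1 <;> revert h2 h3 <;> decide)
    | exact uniq_interval r [P6.a] (by decide)
        (by intro c' h
            have h1 := mem_allPaths c' h.1
            have h2 := h.2.1; have h3 := h.2.2
            fin_cases h1 <;> revert h2 h3 <;> decide)
    | exact uniq_interval r [P6.a, P6.b] (by decide)
        (by intro c' h
            have h1 := mem_allPaths c' h.1
            have h2 := h.2.1; have h3 := h.2.2
            fin_cases h1 <;> revert h2 h3 <;> decide)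
    | exact uniq_interval r [P6.a, P6.b, P6.t] (by decide)
        (by intro c' h
            have h1 := mem_allPaths c' h.1
            have h2 := h.2.1; have h3 := h.2.2
            fin_cases h1 <;> revert h2 h3 <;> decide)
    | exact uniq_interval r [P6.a'] (by decide)
        (by intro c' h
            have h1 := mem_allPaths c' h.1
            have h2 := h.2.1; have h3 := h.2.2
            fin_cases h1 <;> revert h2 h3 <;> decide)
    | exact uniq_interval r [P6.a', P6.b] (by decide)
        (by intro c' h
            have h1 := mem_allPaths c' h.1
            have h2 := h.2.1; have h3 := h.2.2
            fin_cases h1 <;> revert h2 h3 <;> decide)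
    | exact uniq_interval r [P6.a', P6.b, P6.t] (by decide)
        (by intro c' h
            have h1 := mem_allPaths c' h.1
            have h2 := h.2.1; have h3 := h.2.2
            fin_cases h1 <;> revert h2 h3 <;> decide)
    | exact uniq_interval r [P6.x] (by decide)
        (by intro c' h
            have h1 := mem_allPaths c' h.1
            have h2 := h.2.1; have h3 := h.2.2
            fin_cases h1 <;> revert h2 h3 <;> decide)
    | exact uniq_interval r [P6.x, P6.t] (by decide)
        (by intro c' h
            have h1 := mem_allPaths c' h.1
            have h2 := h.2.1; have h3 := h.2.2
            fin_cases h1 <;> revert h2 h3 <;> decide)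
    | exact uniq_interval r [P6.b] (by decide)
        (by intro c' h
            have h1 := mem_allPaths c' h.1
            have h2 := h.2.1; have h3 := h.2.2
            fin_cases h1 <;> revert h2 h3 <;> decide)
    | exact uniq_interval r [P6.b, P6.t] (by decide)
        (by intro c' h
            have h1 := mem_allPaths c' h.1
            have h2 := h.2.1; have h3 := h.2.2
            fin_cases h1 <;> revert h2 h3 <;> decide)
    | exact uniq_interval r [P6.t] (by decide)
        (by intro c' h
            have h1 := mem_allPaths c' h.1
            have h2 := h.2.1; have h3 := h.2.2
            fin_cases h1 <;> revert h2 h3 <;> decide)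

theorem notCC : ¬ IsCCLabeling lab := by
  intro hcc
  have h := (hcc o t [o] (by decide) (by decide)).2 [o, x, t] [o, a, b, t]
    (by decide) (by decide) (by decide)
  apply h.2
  rw [labelSeq_eq, labelSeq_eq]
  decide

end P6



/-- Every CC-labeling of a finite bounded poset is a topological CL-labeling, but
there exists a finite bounded poset with a topological CL-labeling that is not a
CC-labeling. -/
theorem stmt_14 :
    (∀ (α : Type) [PartialOrder α] [BoundedOrder α] [Fintype α]
       (Q : Type) [LinearOrder Q] (lab : List α → α → α → Q),
       IsCCLabeling lab → IsTopolCLLabeling lab) ∧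
    (∃ (α : Type) (_ : PartialOrder α) (_ : BoundedOrder α) (_ : Fintype α)
       (Q : Type) (_ : LinearOrder Q) (lab : List α → α → α → Q),
       IsTopolCLLabeling lab ∧ ¬ IsCCLabeling lab) := by
  constructor
  · intro α _ _ _ Q _ lab hCC u v r hr huv
    obtain ⟨m, hm, hle⟩ := exists_least lab r u v (exists_satChain v u huv)
    refine ⟨m, hm, ?_, ?_⟩
    · intro c' hc' hne
      have h := (hCC u v r hr huv).2 m c' hm hc' (fun e => hne e.symm)
      rcases lex_trichotomy h.1 with h' | h'
      · exact h'
      · exact absurd h' (hle c' hc')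
    · intro c' hc' hne hasc
      have hta : TopAscending lab r m := ascending_of_least lab hCC v m u r hr hm hle
      obtain ⟨c₀, -, huniq⟩ := (hCC u v r hr huv).1
      exact hne ((huniq c' ⟨hc', hasc⟩).trans (huniq m ⟨hm, hta⟩).symm)
  · exact ⟨P6, inferInstance, inferInstance, inferInstance, ℕ, inferInstance, P6.lab,
      P6.topolCL, P6.notCC⟩
end

section
/- If a finite bounded poset P admits a self-consistent topological CL-labeling, then P admits a generalized recursive atom ordering. -/
/-- A chain-atom ordering of a bounded poset `α`: for each `u : α` and each root `r`
(a saturated chain from `⊥` to `u`, recorded as a list ending in `u`), a strict linear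
order on the atoms of the rooted interval `[u, ⊤]_r`, i.e. on the elements covering `u`.
The relation is recorded for all pairs `(u, r)`; only genuine roots are relevant. -/
structure ChainAtomOrdering (α : Type*) [PartialOrder α] where
  lt : α → List α → α → α → Prop
  irrefl : ∀ u r a, ¬ lt u r a a
  trans : ∀ u r a b c, lt u r a b → lt u r b c → lt u r a c
  total : ∀ u r a b, u ⋖ a → u ⋖ b → a ≠ b → lt u r a b ∨ lt u r b a

/-- `a` is the first atom of the rooted interval `[u,v]_r` in the chain-atom ordering `S`. -/
def ChainAtomOrdering.IsFirstAtom {α : Type*} [PartialOrder α] (S : ChainAtomOrdering α)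
    (u v : α) (r : List α) (a : α) : Prop :=
  u ⋖ a ∧ a ≤ v ∧ ∀ b, u ⋖ b → b ≤ v → b ≠ a → S.lt u r a b

/-- `IsGRAO S u v r`: the restriction of the chain-atom ordering `S` to the rooted
interval `[u,v]_r` is a generalized recursive atom ordering (GRAO) of `[u,v]`.
Either `[u,v]` has length 1, or: (i)(a) for each atom `a` of `[u,v]_r` the restriction
to `[a,v]_{r·a}` is a GRAO; (i)(b) for each atom `a` and each `a ⋖ x ⋖ w ≤ v`, either
the first atom of `[a,w]_{r·a}` lies above some atom of `[u,v]_r` earlier than `a`, or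
no atom of `[a,w]_{r·a}` does; (ii) if atoms `ai, aj` of `[u,v]_r` with `ai` earlier
than `aj` lie below a common `y ≤ v`, then some `z` with `aj ⋖ z ≤ y` lies above an
atom of `[u,v]_r` earlier than `aj`. -/
inductive IsGRAO {α : Type*} [PartialOrder α] (S : ChainAtomOrdering α) :
    α → α → List α → Prop
  | base (u v : α) (r : List α) (h : u ⋖ v) : IsGRAO S u v r
  | step (u v : α) (r : List α)
      (ia : ∀ a, u ⋖ a → a ≤ v → IsGRAO S a v (r ++ [a]))
      (ib : ∀ a x w, u ⋖ a → a ≤ v → a ⋖ x → x ⋖ w → w ≤ v →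
        (∃ b, S.IsFirstAtom a w (r ++ [a]) b ∧
          ∃ a', u ⋖ a' ∧ a' ≤ v ∧ S.lt u r a' a ∧ a' < b) ∨
        (∀ b a', a ⋖ b → b ≤ w → u ⋖ a' → a' ≤ v → S.lt u r a' a → ¬ a' < b))
      (ii : ∀ ai aj y, u ⋖ ai → ai ≤ v → u ⋖ aj → aj ≤ v → S.lt u r ai aj →
        ai < y → aj < y → y ≤ v →
        ∃ ak z, u ⋖ ak ∧ ak ≤ v ∧ S.lt u r ak aj ∧ aj ⋖ z ∧ z ≤ y ∧ ak < z) :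
      IsGRAO S u v r

/-- `IsRAO S u v r`: the restriction of the chain-atom ordering `S` to the rooted
interval `[u,v]_r` is a recursive atom ordering (RAO) of `[u,v]`.  It differs from a
GRAO only in condition (i)(b): for each atom `a` of `[u,v]_r`, every atom of
`[a,v]_{r·a}` lying above some atom of `[u,v]_r` earlier than `a` must precede every
atom of `[a,v]_{r·a}` lying above no such atom. -/
inductive IsRAO {α : Type*} [PartialOrder α] (S : ChainAtomOrdering α) :
    α → α → List α → Prop
  | base (u v : α) (r : List α) (h : u ⋖ v) : IsRAO S u v r
  | step (u v : α) (r : List α)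
      (ia : ∀ a, u ⋖ a → a ≤ v → IsRAO S a v (r ++ [a]))
      (ib : ∀ a b c, u ⋖ a → a ≤ v → a ⋖ b → b ≤ v → a ⋖ c → c ≤ v →
        (∃ a', u ⋖ a' ∧ a' ≤ v ∧ S.lt u r a' a ∧ a' < b) →
        (∀ a', u ⋖ a' → a' ≤ v → S.lt u r a' a → ¬ a' < c) →
        S.lt a (r ++ [a]) b c)
      (ii : ∀ ai aj y, u ⋖ ai → ai ≤ v → u ⋖ aj → aj ≤ v → S.lt u r ai aj →
        ai < y → aj < y → y ≤ v →
        ∃ ak z, u ⋖ ak ∧ ak ≤ v ∧ S.lt u r ak aj ∧ aj ⋖ z ∧ z ≤ y ∧ ak < z) :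
      IsRAO S u v r

set_option linter.unusedSectionVars false
set_option linter.unnecessarySimpa false
set_option maxHeartbeats 1000000


namespace GraoAux

variable {α : Type*} [PartialOrder α]

lemma satChain_ne_nil {x y : α} {c : List α} (h : SatChain x y c) : c ≠ [] := by
  rintro rfl; simp [SatChain] at h

lemma satChain_singleton (x : α) : SatChain x x [x] := ⟨List.isChain_singleton _, rfl, rfl⟩

lemma satChain_pair {x y : α} (h : x ⋖ y) : SatChain x y [x, y] :=
  ⟨List.isChain_pair.2 h, rfl, rfl⟩

lemma satChain_cons {x a y : α} {c : List α} (h : x ⋖ a) (hc : SatChain a y c) :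
    SatChain x y (x :: c) := by
  obtain ⟨h1, h2, h3⟩ := hc
  cases c with
  | nil => simp at h2
  | cons b t =>
    have hb : b = a := by simpa using h2
    subst hb
    exact ⟨List.isChain_cons_cons.2 ⟨h, h1⟩, rfl, by rw [List.getLast?_cons_cons]; exact h3⟩

lemma satChain_tail {x b y : α} {t : List α} (h : SatChain x y (x :: b :: t)) :
    SatChain b y (b :: t) :=
  ⟨(List.isChain_cons_cons.1 h.1).2, rfl, by rw [← List.getLast?_cons_cons (a := x)]; exact h.2.2⟩

lemma satChain_cons_cases {u v : α} {c : List α} (hc : SatChain u v c) (hne : u ≠ v) :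
    ∃ a t, c = u :: a :: t ∧ u ⋖ a ∧ SatChain a v (a :: t) := by
  obtain ⟨h1, h2, h3⟩ := hc
  cases c with
  | nil => simp at h2
  | cons b s =>
    have hb : b = u := by simpa using h2
    subst hb
    cases s with
    | nil => exact absurd (by simpa using h3) hne
    | cons a t =>
      refine ⟨a, t, rfl, (List.isChain_cons_cons.1 h1).1, satChain_tail ⟨h1, rfl, h3⟩⟩

lemma satChain_mem_le : ∀ (c : List α) (x y : α), SatChain x y c →
    ∀ a ∈ c, x ≤ a ∧ a ≤ y := by
  intro c
  induction c with
  | nil => intro x y h; exact absurd rfl (satChain_ne_nil h)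
  | cons b s ih =>
    intro x y h a ha
    have hb : b = x := by simpa using h.2.1
    subst hb
    cases s with
    | nil =>
      have : b = y := by simpa using h.2.2
      subst this
      have : a = b := by simpa using ha
      subst this; exact ⟨le_rfl, le_rfl⟩
    | cons b2 t =>
      have hcov : b ⋖ b2 := (List.isChain_cons_cons.1 h.1).1
      have htail : SatChain b2 y (b2 :: t) := satChain_tail h
      rcases List.mem_cons.1 ha with rfl | ha'
      · have := (ih b2 y htail b2 (by simp)).2
        exact ⟨le_rfl, hcov.lt.le.trans this⟩
      · have := ih b2 y htail a ha'
        exact ⟨hcov.lt.le.trans this.1, this.2⟩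

lemma satChain_le {x y : α} {c : List α} (h : SatChain x y c) : x ≤ y := by
  cases c with
  | nil => exact absurd rfl (satChain_ne_nil h)
  | cons b s =>
    have hb : b = x := by simpa using h.2.1
    subst hb
    exact (satChain_mem_le _ _ _ h b (by simp)).2

lemma satChain_self {x : α} {c : List α} (h : SatChain x x c) : c = [x] := by
  cases c with
  | nil => exact absurd rfl (satChain_ne_nil h)
  | cons b s =>
    have hb : b = x := by simpa using h.2.1
    subst hb
    cases s with
    | nil => rfl
    | cons b2 t =>
      have hcov : b ⋖ b2 := (List.isChain_cons_cons.1 h.1).1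
      have : b2 ≤ b := (satChain_mem_le _ _ _ h b2 (by simp)).2
      exact absurd this hcov.lt.not_ge

lemma satChain_covby_eq {a z : α} {c : List α} (h : SatChain a z c) (hc : a ⋖ z) :
    c = [a, z] := by
  obtain ⟨b, t, rfl, hab, hbz⟩ := satChain_cons_cases h hc.lt.ne
  have hbz' : b ≤ z := (satChain_mem_le _ _ _ h b (by simp)).2
  have : b = z := by
    rcases lt_or_eq_of_le hbz' with hlt | he
    · exact absurd hlt (hc.2 hab.lt)
    · exact he
  subst this
  rw [satChain_self hbz]

lemma satChain_glue {x y z : α} {c t : List α} (hc : SatChain x y c)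
    (hd : SatChain y z (y :: t)) : SatChain x z (c ++ t) := by
  cases t with
  | nil =>
    have : y = z := by simpa using hd.2.2
    subst this
    simpa using hc
  | cons e t' =>
    have hye : y ⋖ e := (List.isChain_cons_cons.1 hd.1).1
    refine ⟨?_, ?_, ?_⟩
    · refine List.isChain_append.2 ⟨hc.1, (List.isChain_cons_cons.1 hd.1).2, ?_⟩
      intro p hp q hq
      rw [hc.2.2] at hp
      simp at hp hq
      rw [← hp, ← hq]; exact hye
    · rw [List.head?_append]
      cases c with
      | nil => exact absurd rfl (satChain_ne_nil hc)
      | cons b s => simpa using hc.2.1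
    · rw [List.getLast?_append]
      have : (e :: t').getLast? = some z := by
        rw [← List.getLast?_cons_cons (a := y)]; exact hd.2.2
      simp [this]

lemma root_append {u a : α} {r : List α} [OrderBot α] (hr : SatChain ⊥ u r) (h : u ⋖ a) :
    SatChain ⊥ a (r ++ [a]) :=
  satChain_glue hr (satChain_pair h)

lemma satChain_three {u p w : α} {d : List α} (h : SatChain u w d) (hup : u ⋖ p)
    (hpw : p ⋖ w) : 3 ≤ d.length := by
  obtain ⟨b, t, rfl, hub, hbt⟩ := satChain_cons_cases h (hup.lt.trans hpw.lt).ne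
  cases t with
  | nil =>
    have : b = w := by simpa using hbt.2.2
    subst this
    exact absurd hpw.lt (hub.2 hup.lt)
  | cons b2 t' => simp

end GraoAux
namespace GraoAux

variable {α Q : Type*} [PartialOrder α] [LinearOrder Q]

@[simp] lemma labelSeq_nil (lab : List α → α → α → Q) (r : List α) :
    labelSeq lab r [] = [] := rfl

@[simp] lemma labelSeq_single (lab : List α → α → α → Q) (r : List α) (x : α) :
    labelSeq lab r [x] = [] := rfl

@[simp] lemma labelSeq_cons (lab : List α → α → α → Q) (r : List α) (x y : α) (c : List α) :
    labelSeq lab r (x :: y :: c) = lab r x y :: labelSeq lab (r ++ [y]) (y :: c) := rfl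

lemma labelSeq_length (lab : List α → α → α → Q) :
    ∀ (c : List α) (r : List α), (labelSeq lab r c).length = c.length - 1
  | [], _ => rfl
  | [_], _ => rfl
  | x :: y :: c, r => by
    rw [labelSeq_cons, List.length_cons]
    rw [labelSeq_length lab (y :: c) (r ++ [y])]
    simp

lemma labelSeq_append (lab : List α → α → α → Q) :
    ∀ (c : List α), c ≠ [] → ∀ (r : List α) (x : α) (d : List α),
      labelSeq lab r (c ++ x :: d) =
        labelSeq lab r (c ++ [x]) ++ labelSeq lab (r ++ (c ++ [x]).tail) (x :: d)
  | [], h => absurd rfl h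
  | [a], _ => by intro r x d; simp
  | a :: b :: c', _ => by
    intro r x d
    have IH := labelSeq_append lab (b :: c') (by simp) (r ++ [b]) x d
    simp only [List.cons_append, labelSeq_cons] at *
    rw [IH]
    simp [List.append_assoc]

/-! Lex lemmas -/

lemma lex_trans {s t u : List Q} (h1 : List.Lex (· < ·) s t) (h2 : List.Lex (· < ·) t u) :
    List.Lex (· < ·) s u := List.lex_trans (fun h1 h2 => lt_trans h1 h2) h1 h2

lemma lex_asymm {s t : List Q} (h1 : List.Lex (· < ·) s t) (h2 : List.Lex (· < ·) t s) :
    False := asymm h1 h2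

lemma lex_irrefl {s : List Q} (h : List.Lex (· < ·) s s) : False := lex_asymm h h

lemma lex_total {s t : List Q} (h : s ≠ t) :
    List.Lex (· < ·) s t ∨ List.Lex (· < ·) t s := by
  rcases (by by_contra hc; exact h (Std.Trichotomous.trichotomous s t (fun x => hc (Or.inl x)) (fun x => hc (Or.inr (Or.inr x)))) : List.Lex (· < ·) s t ∨ s = t ∨ List.Lex (· < ·) t s) with h' | h' | h'
  · exact Or.inl h'
  · exact absurd h' h
  · exact Or.inr h'

lemma lex_cons_inv {a : Q} {s t : List Q} (h : List.Lex (· < ·) (a :: s) (a :: t)) :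
    List.Lex (· < ·) s t := ((List.cons_lex_cons_iff.1 h).resolve_left (lt_irrefl a)).2

lemma lex_append_inv : ∀ (s : List Q) {t₁ t₂ : List Q},
    List.Lex (· < ·) (s ++ t₁) (s ++ t₂) → List.Lex (· < ·) t₁ t₂
  | [], _, _, h => h
  | _ :: s, _, _, h => lex_append_inv s (lex_cons_inv h)

lemma prefix_lex : ∀ (s u : List Q), u ≠ [] → List.Lex (· < ·) s (s ++ u)
  | [], [], h => absurd rfl h
  | [], _ :: _, _ => List.Lex.nil
  | _ :: s, u, h => List.Lex.cons (prefix_lex s u h)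

lemma lex_of_prefix_ne {s t : List Q} (h : s <+: t) (hne : s ≠ t) :
    List.Lex (· < ·) s t := by
  obtain ⟨u, rfl⟩ := h
  refine prefix_lex s u ?_
  rintro rfl
  exact hne (by simp)

lemma lex_split : ∀ (s t x y : List Q), List.Lex (· < ·) (s ++ x) (t ++ y) →
    s.length ≤ t.length → List.Lex (· < ·) s t ∨ s <+: t
  | [], _, _, _, _, _ => Or.inr List.nil_prefix
  | _ :: _, [], _, _, _, hl => by simp at hl
  | a :: s, b :: t, x, y, h, hl => by
    simp only [List.cons_append] at h
    cases h with
    | rel hab => exact Or.inl (List.Lex.rel hab)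
    | cons h' =>
      rcases lex_split s t x y h' (by simpa using hl) with h'' | h''
      · exact Or.inl (List.Lex.cons h'')
      · exact Or.inr (List.cons_prefix_cons.2 ⟨rfl, h''⟩)

lemma lex_append_of_lex : ∀ (s t x y : List Q), List.Lex (· < ·) s t →
    t.length ≤ s.length → List.Lex (· < ·) (s ++ x) (t ++ y)
  | _, [], _, _, h, _ => absurd h List.not_lex_nil
  | [], _ :: _, _, _, _, hl => by simp at hl
  | a :: s, b :: t, x, y, h, hl => by
    simp only [List.cons_append]
    cases h with
    | rel hab => exact List.Lex.rel hab
    | cons h' => exact List.Lex.cons (lex_append_of_lex s t x y h' (by simpa using hl))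

end GraoAux
namespace GraoAux

section Main

variable {α Q : Type*} [PartialOrder α] [BoundedOrder α] [Fintype α] [LinearOrder Q]

lemma exists_satChain : ∀ (x y : α), x ≤ y → ∃ c, SatChain x y c := by
  have wf : WellFounded ((· > ·) : α → α → Prop) := wellFounded_gt
  haveI : IsStronglyAtomic α := IsStronglyAtomic.of_wellFounded_lt wellFounded_lt
  intro x
  induction x using wf.induction with
  | _ x ih =>
    intro y hxy
    rcases eq_or_lt_of_le hxy with rfl | hlt
    · exact ⟨[x], satChain_singleton x⟩
    · obtain ⟨t, ht, hty⟩ := hlt.exists_covby_le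
      obtain ⟨c, hc⟩ := ih t ht.lt y hty
      exact ⟨x :: c, satChain_cons ht hc⟩

noncomputable def chainTop (x : α) : List α := (exists_satChain x ⊤ le_top).choose

lemma chainTop_spec (x : α) : SatChain x ⊤ (chainTop x) :=
  (exists_satChain x ⊤ le_top).choose_spec

noncomputable def Jseq (lab : List α → α → α → Q) (r : List α) (u x : α) : List Q :=
  labelSeq lab r (u :: chainTop x)

noncomputable def graoS (lab : List α → α → α → Q) : ChainAtomOrdering α where
  lt u r a b := List.Lex (· < ·) (Jseq lab r u a) (Jseq lab r u b) ∨
    (Jseq lab r u a = Jseq lab r u b ∧ Fintype.equivFin α a < Fintype.equivFin α b)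
  irrefl := by
    rintro u r a (h | ⟨-, h⟩)
    · exact lex_irrefl h
    · exact lt_irrefl _ h
  trans := by
    rintro u r a b c (h1 | ⟨e1, h1⟩) (h2 | ⟨e2, h2⟩)
    · exact Or.inl (lex_trans h1 h2)
    · exact Or.inl (e2 ▸ h1)
    · exact Or.inl (e1 ▸ h2)
    · exact Or.inr ⟨e1.trans e2, h1.trans h2⟩
  total := by
    intro u r a b _ _ hne
    by_cases he : Jseq lab r u a = Jseq lab r u b
    · rcases lt_or_gt_of_ne (fun h => hne ((Fintype.equivFin α).injective h)) with h | h
      · exact Or.inl (Or.inr ⟨he, h⟩)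
      · exact Or.inr (Or.inr ⟨he.symm, h⟩)
    · rcases lex_total he with h | h
      · exact Or.inl (Or.inl h)
      · exact Or.inr (Or.inl h)

lemma graoS_asymm (lab : List α → α → α → Q) {u : α} {r : List α} {a b : α}
    (h1 : (graoS lab).lt u r a b) (h2 : (graoS lab).lt u r b a) : False :=
  (graoS lab).irrefl u r a ((graoS lab).trans u r a b a h1 h2)

lemma graoS_ne (lab : List α → α → α → Q) {u : α} {r : List α} {a b : α}
    (h1 : (graoS lab).lt u r a b) : a ≠ b := by
  rintro rfl; exact (graoS lab).irrefl u r a h1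

lemma satChain_head_mem {x y : α} {c : List α} (h : SatChain x y c) : x ∈ c := by
  cases c with
  | nil => exact absurd rfl (satChain_ne_nil h)
  | cons b s => have : b = x := by simpa using h.2.1
                simp [this.symm]

lemma lt_of_selfConsistent {lab : List α → α → α → Q} (h2 : SelfConsistent lab)
    {u v : α} {r c₀ : List α} (hr : SatChain (⊥ : α) u r) (hc₀ : SatChain u v c₀)
    (hmin : ∀ c, SatChain u v c → c ≠ c₀ →
      List.Lex (· < ·) (labelSeq lab r c₀) (labelSeq lab r c))
    {a b : α} (ha : u ⋖ a) (hma : a ∈ c₀) (hb : u ⋖ b) (hbv : b ≤ v) (hne : b ≠ a) :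
    (graoS lab).lt u r a b := by
  have key := h2 u v r hr c₀ hc₀ hmin a ha hma b hb hbv hne ⊤ le_top le_top
    (u :: chainTop a) (u :: chainTop b)
    (satChain_cons ha (chainTop_spec a))
    (List.mem_cons_of_mem _ (satChain_head_mem (chainTop_spec a)))
    (satChain_cons hb (chainTop_spec b))
    (List.mem_cons_of_mem _ (satChain_head_mem (chainTop_spec b)))
  exact Or.inl key

end Main

end GraoAux
namespace GraoAux

section Main2

variable {α Q : Type*} [PartialOrder α] [BoundedOrder α] [Fintype α] [LinearOrder Q]

lemma dropLast_ne_nil_of_len {f : List α} (h : 3 ≤ f.length) : f.dropLast ≠ [] := by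
  intro hh
  have := congrArg List.length hh
  simp at this
  omega

lemma seq_glue_decomp (lab : List α → α → α → Q) {u w : α} {f : List α}
    (hf : SatChain u w f) (hne2 : f.dropLast ≠ []) (r c'' : List α) :
    labelSeq lab r (f ++ c'') = labelSeq lab r f ++ labelSeq lab (r ++ f.tail) (w :: c'') := by
  have hfl : f ≠ [] := satChain_ne_nil hf
  have hw : f.getLast hfl = w := by
    have := hf.2.2; rw [List.getLast?_eq_getLast hfl] at this; simpa using this
  have hlast : f.dropLast ++ [w] = f := by rw [← hw]; exact List.dropLast_append_getLast hfl
  calc labelSeq lab r (f ++ c'')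
      = labelSeq lab r (f.dropLast ++ w :: c'') := by rw [← hlast]; simp
    _ = labelSeq lab r (f.dropLast ++ [w]) ++
          labelSeq lab (r ++ (f.dropLast ++ [w]).tail) (w :: c'') :=
        labelSeq_append lab f.dropLast hne2 r w c''
    _ = labelSeq lab r f ++ labelSeq lab (r ++ f.tail) (w :: c'') := by rw [hlast]

lemma exists_earlier_of_not_topAscent {lab : List α → α → α → Q}
    (h1 : IsTopolCLLabeling lab) (h2 : SelfConsistent lab)
    {u a z : α} {r : List α} (hr : SatChain (⊥ : α) u r) (hua : u ⋖ a) (haz : a ⋖ z)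
    (hna : ¬ TopAscent lab r u a z) :
    ∃ a₁, u ⋖ a₁ ∧ a₁ < z ∧ (graoS lab).lt u r a₁ a := by
  have hd : ∃ d, SatChain u z d ∧ d ≠ [u, a, z] ∧
      ¬ List.Lex (· < ·) (labelSeq lab r [u, a, z]) (labelSeq lab r d) := by
    by_contra hcon
    push_neg at hcon
    exact hna ⟨hua, haz, fun c hc hne => hcon c hc hne⟩
  obtain ⟨d, hdsat, hdne, hdnl⟩ := hd
  have huz : u < z := hua.lt.trans haz.lt
  obtain ⟨c₃, hc₃, hmin, -⟩ := h1 u z r hr huz.le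
  obtain ⟨a₁, t, hc₃eq, hua₁, hrest⟩ := satChain_cons_cases hc₃ huz.ne
  by_cases he : a₁ = a
  · subst he
    have ht : (a₁ :: t) = [a₁, z] := satChain_covby_eq hrest haz
    have hc₃' : c₃ = [u, a₁, z] := by rw [hc₃eq, ht]
    have := hmin d hdsat (by rw [hc₃']; exact hdne)
    rw [hc₃'] at this
    exact absurd this hdnl
  · have hmem : a₁ ≤ z := (satChain_mem_le _ _ _ hc₃ a₁ (by rw [hc₃eq]; simp)).2
    have hnez : a₁ ≠ z := by
      rintro rfl
      exact absurd haz.lt (hua₁.2 hua.lt)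
    refine ⟨a₁, hua₁, lt_of_le_of_ne hmem hnez, ?_⟩
    exact lt_of_selfConsistent h2 hr hc₃ hmin hua₁ (by rw [hc₃eq]; simp) hua haz.lt.le
      (fun hh => he hh.symm)

lemma topAscending_of_min {lab : List α → α → α → Q} (h1 : IsTopolCLLabeling lab) :
    ∀ (c : List α) (u v : α) (r : List α), SatChain (⊥ : α) u r → SatChain u v c →
      (∀ c', SatChain u v c' → c' ≠ c →
        List.Lex (· < ·) (labelSeq lab r c) (labelSeq lab r c')) →
      TopAscending lab r c := by
  intro c
  induction c with
  | nil => intro u v r _ _ _; trivial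
  | cons hd tl ih =>
    intro u v r hr hc hmin
    have hhd : hd = u := by simpa using hc.2.1
    subst hhd
    cases tl with
    | nil => trivial
    | cons p tl2 =>
      cases tl2 with
      | nil => trivial
      | cons w c'' =>
        have hup : hd ⋖ p := (List.isChain_cons_cons.1 hc.1).1
        have htail : SatChain p v (p :: w :: c'') := satChain_tail hc
        have hpw : p ⋖ w := (List.isChain_cons_cons.1 htail.1).1
        have hwv : SatChain w v (w :: c'') := satChain_tail htail
        have hrp : SatChain (⊥ : α) p (r ++ [p]) := root_append hr hup
        have tailmin : ∀ d, SatChain p v d → d ≠ p :: w :: c'' →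
            List.Lex (· < ·) (labelSeq lab (r ++ [p]) (p :: w :: c''))
              (labelSeq lab (r ++ [p]) d) := by
          intro d hdsat hdne
          obtain ⟨q, d', rfl⟩ : ∃ q d', d = q :: d' := by
            cases d with
            | nil => exact absurd rfl (satChain_ne_nil hdsat)
            | cons q d' => exact ⟨q, d', rfl⟩
          have hq : q = p := by simpa using hdsat.2.1
          subst hq
          have := hmin (hd :: q :: d') (satChain_cons hup hdsat)
            (by intro h; apply hdne; injection h)
          rw [labelSeq_cons, labelSeq_cons] at this
          exact lex_cons_inv this
        have hcdec : labelSeq lab r (hd :: p :: w :: c'') =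
            labelSeq lab r [hd, p, w] ++ labelSeq lab (r ++ [p, w]) (w :: c'') := by
          have := labelSeq_append lab [hd, p] (by simp) r w c''
          simpa using this
        have ascent : TopAscent lab r hd p w := by
          refine ⟨hup, hpw, ?_⟩
          intro d hdsat hdne
          have hd3 : 3 ≤ d.length := satChain_three hdsat hup hpw
          have hdropne : d.dropLast ≠ [] := dropLast_ne_nil_of_len hd3
          have he : SatChain hd v (d ++ c'') := satChain_glue hdsat hwv
          have hene : d ++ c'' ≠ hd :: p :: w :: c'' := by
            intro h
            exact hdne (List.append_cancel_right (h.trans (by simp)))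
          have hlex : List.Lex (· < ·)
              (labelSeq lab r [hd, p, w] ++ labelSeq lab (r ++ [p, w]) (w :: c''))
              (labelSeq lab r d ++ labelSeq lab (r ++ d.tail) (w :: c'')) := by
            have := hmin (d ++ c'') he hene
            rw [hcdec, seq_glue_decomp lab hdsat hdropne r c''] at this
            exact this
          have hAlen : (labelSeq lab r [hd, p, w]).length = 2 := by
            rw [labelSeq_length]; rfl
          have hBlen : 2 ≤ (labelSeq lab r d).length := by
            rw [labelSeq_length]; omega
          rcases lex_split _ _ _ _ hlex (by omega) with hgood | hpre
          · exact hgood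
          · by_cases hB2 : (labelSeq lab r d).length = 2
            · -- tie case
              have hAB : labelSeq lab r [hd, p, w] = labelSeq lab r d :=
                hpre.eq_of_length (by omega)
              obtain ⟨f, hfsat, hfmin, -⟩ := h1 hd w r hr (hup.lt.trans hpw.lt).le
              have hupwsat : SatChain hd w [hd, p, w] := ⟨List.isChain_cons_cons.2 ⟨hup, List.isChain_pair.2 hpw⟩, rfl, rfl⟩
              by_cases hfp : f = [hd, p, w]
              · exfalso
                have := hfmin d hdsat (by rw [hfp]; exact hdne)
                rw [hfp] at this
                rw [hAB] at this
                exact lex_irrefl this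
              · by_cases hfd : f = d
                · exfalso
                  have := hfmin [hd, p, w] hupwsat (fun h => hfp h.symm)
                  rw [hfd, hAB] at this
                  exact lex_irrefl this
                · exfalso
                  have hflex : List.Lex (· < ·) (labelSeq lab r f)
                      (labelSeq lab r [hd, p, w]) :=
                    hfmin [hd, p, w] hupwsat (fun h => hfp h.symm)
                  have hf3 : 3 ≤ f.length := satChain_three hfsat hup hpw
                  have hfdropne : f.dropLast ≠ [] := dropLast_ne_nil_of_len hf3
                  have hFlen : 2 ≤ (labelSeq lab r f).length := by
                    rw [labelSeq_length]; omega
                  have hef : SatChain hd v (f ++ c'') := satChain_glue hfsat hwv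
                  have hefne : f ++ c'' ≠ hd :: p :: w :: c'' := by
                    intro h
                    exact hfp (List.append_cancel_right (h.trans (by simp)))
                  have hlex2 : List.Lex (· < ·)
                      (labelSeq lab r [hd, p, w] ++ labelSeq lab (r ++ [p, w]) (w :: c''))
                      (labelSeq lab r f ++ labelSeq lab (r ++ f.tail) (w :: c'')) := by
                    have := hmin (f ++ c'') hef hefne
                    rw [hcdec, seq_glue_decomp lab hfsat hfdropne r c''] at this
                    exact this
                  have htk : ((labelSeq lab r f).take 2).length = 2 := by
                    rw [List.length_take]; omega
                  rcases lex_split ((labelSeq lab r f).take 2) (labelSeq lab r [hd, p, w])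
                      ((labelSeq lab r f).drop 2) []
                      (by rw [List.take_append_drop, List.append_nil]; exact hflex)
                      (by omega) with h2' | hpre2
                  · have hgt : List.Lex (· < ·)
                        (labelSeq lab r f ++ labelSeq lab (r ++ f.tail) (w :: c''))
                        (labelSeq lab r [hd, p, w] ++ labelSeq lab (r ++ [p, w]) (w :: c'')) := by
                      have := lex_append_of_lex ((labelSeq lab r f).take 2)
                        (labelSeq lab r [hd, p, w])
                        ((labelSeq lab r f).drop 2 ++ labelSeq lab (r ++ f.tail) (w :: c''))
                        (labelSeq lab (r ++ [p, w]) (w :: c'')) h2' (by omega)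
                      rw [← List.append_assoc, List.take_append_drop] at this
                      exact this
                    exact lex_asymm hlex2 hgt
                  · have hFA : (labelSeq lab r f).take 2 = labelSeq lab r [hd, p, w] :=
                      hpre2.eq_of_length (by omega)
                    have hdrop : List.Lex (· < ·) ((labelSeq lab r f).drop 2) [] := by
                      have h5 : List.Lex (· < ·)
                          ((labelSeq lab r f).take 2 ++ (labelSeq lab r f).drop 2)
                          ((labelSeq lab r f).take 2 ++ []) := by
                        rw [List.take_append_drop, List.append_nil, hFA]
                        exact hflex
                      exact lex_append_inv _ h5
                    exact List.not_lex_nil hdrop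
            · -- strict prefix case
              exact lex_of_prefix_ne hpre (by
                intro h
                apply hB2
                rw [← h, hAlen])
        exact ⟨ascent, ih p v (r ++ [p]) hrp htail tailmin⟩

end Main2

end GraoAux
namespace GraoAux

section Main3

variable {α Q : Type*} [PartialOrder α] [BoundedOrder α] [Fintype α] [LinearOrder Q]

lemma isGRAO_of_labeling {lab : List α → α → α → Q} (h1 : IsTopolCLLabeling lab)
    (h2 : SelfConsistent lab) :
    ∀ (n : ℕ) (u : α) (r : List α), (Set.Ici u).ncard ≤ n → SatChain (⊥ : α) u r →
      IsGRAO (graoS lab) u ⊤ r := by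
  intro n
  induction n with
  | zero =>
    intro u r hcard _
    exfalso
    have : 0 < (Set.Ici u).ncard := (Set.ncard_pos (Set.toFinite _)).2 ⟨u, le_rfl⟩
    omega
  | succ n ih =>
    intro u r hcard hr
    have hdec : ∀ a : α, u ⋖ a → (Set.Ici a).ncard ≤ n := by
      intro a ha
      have hss : Set.Ici a ⊂ Set.Ici u := by
        constructor
        · intro z hz
          exact ha.lt.le.trans hz
        · intro hsub
          have : a ≤ u := hsub (Set.mem_Ici.2 (le_refl u))
          exact absurd this ha.lt.not_ge
      have := Set.ncard_lt_ncard hss (Set.toFinite _)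
      omega
    refine IsGRAO.step u ⊤ r ?_ ?_ ?_
    · -- (i)(a)
      intro a ha _
      exact ih a (r ++ [a]) (hdec a ha) (root_append hr ha)
    · -- (i)(b)
      intro a x w ha _ hax hxw _
      have haw : a < w := hax.lt.trans hxw.lt
      have hra : SatChain (⊥ : α) a (r ++ [a]) := root_append hr ha
      obtain ⟨e, he, hemin, -⟩ := h1 a w (r ++ [a]) hra haw.le
      obtain ⟨b, te, heeq, hab, hbsat⟩ := satChain_cons_cases he haw.ne
      have hbw : b ≤ w := (satChain_mem_le _ _ _ he b (by rw [heeq]; simp)).2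
      have hfirst : (graoS lab).IsFirstAtom a w (r ++ [a]) b := by
        refine ⟨hab, hbw, fun b' hb' hb'w hne => ?_⟩
        exact lt_of_selfConsistent h2 hra he hemin hab (by rw [heeq]; simp) hb' hb'w hne
      by_cases H : ∃ a', u ⋖ a' ∧ (graoS lab).lt u r a' a ∧ a' < b
      · obtain ⟨a', h1', h2', h3'⟩ := H
        exact Or.inl ⟨b, hfirst, a', h1', le_top, h2', h3'⟩
      · refine Or.inr fun b'' a' hab'' hb''w hua' _ hlt' hcon => ?_
        have huw : u < w := ha.lt.trans haw
        obtain ⟨c₂, hc₂, hc₂min, hc₂asc⟩ := h1 u w r hr huw.le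
        obtain ⟨abar, t2, hc₂eq, habar, -⟩ := satChain_cons_cases hc₂ huw.ne
        have ha'ne : a' ≠ a := by
          rintro rfl
          exact (graoS lab).irrefl u r a' hlt'
        have habarne : abar ≠ a := by
          rintro rfl
          have := lt_of_selfConsistent h2 hr hc₂ hc₂min ha (by rw [hc₂eq]; simp) hua'
            (hcon.le.trans hb''w) ha'ne
          exact graoS_asymm lab hlt' this
        have hasc : TopAscending lab (r ++ [a]) e :=
          topAscending_of_min h1 e a w (r ++ [a]) hra he hemin
        have hnasc : ¬ TopAscending lab r (u :: e) := by
          apply hc₂asc (u :: e) (satChain_cons ha he)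
          rw [hc₂eq, heeq]
          intro hh
          injection hh with _ hh2
          injection hh2 with hh3 _
          exact habarne hh3.symm
        have hnta : ¬ TopAscent lab r u a b := by
          intro hta
          apply hnasc
          rw [heeq]
          rw [heeq] at hasc
          exact ⟨hta, hasc⟩
        obtain ⟨a₁, g1, g2, g3⟩ := exists_earlier_of_not_topAscent h1 h2 hr ha hab hnta
        exact H ⟨a₁, g1, g3, g2⟩
    · -- (ii)
      intro ai aj y hai _ haj _ hlt hiy hjy _
      have huy : u < y := hai.lt.trans hiy
      obtain ⟨c₀, hc₀, hc₀min, hc₀asc⟩ := h1 u y r hr huy.le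
      obtain ⟨a0, t0, hc₀eq, hua0, -⟩ := satChain_cons_cases hc₀ huy.ne
      have hane : ai ≠ aj := by
        rintro rfl
        exact (graoS lab).irrefl u r ai hlt
      have ha0 : a0 ≠ aj := by
        rintro rfl
        have := lt_of_selfConsistent h2 hr hc₀ hc₀min haj (by rw [hc₀eq]; simp) hai
          hiy.le hane
        exact graoS_asymm lab hlt this
      obtain ⟨m, hm, hmmin, -⟩ := h1 aj y (r ++ [aj]) (root_append hr haj) hjy.le
      have hasc : TopAscending lab (r ++ [aj]) m :=
        topAscending_of_min h1 m aj y (r ++ [aj]) (root_append hr haj) hm hmmin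
      obtain ⟨z₁, t₁, hmeq, hjz, hz₁sat⟩ := satChain_cons_cases hm hjy.ne
      have hum : SatChain u y (u :: m) := satChain_cons haj hm
      have hne : u :: m ≠ c₀ := by
        rw [hc₀eq, hmeq]
        intro hh
        injection hh with _ hh2
        injection hh2 with hh3 _
        exact ha0 hh3.symm
      have hnasc : ¬ TopAscending lab r (u :: m) := hc₀asc (u :: m) hum hne
      have hnta : ¬ TopAscent lab r u aj z₁ := by
        intro hta
        apply hnasc
        rw [hmeq]
        rw [hmeq] at hasc
        exact ⟨hta, hasc⟩
      obtain ⟨a₁, g1, g2, g3⟩ := exists_earlier_of_not_topAscent h1 h2 hr haj hjz hnta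
      exact ⟨a₁, z₁, g1, le_top, g3, hjz,
        (satChain_mem_le _ _ _ hm z₁ (by rw [hmeq]; simp)).2, g2⟩

end Main3

end GraoAux

/-- If a finite bounded poset admits a self-consistent topological CL-labeling, then
it admits a generalized recursive atom ordering. -/
theorem stmt_15 {α Q : Type*} [PartialOrder α] [BoundedOrder α] [Fintype α]
    [LinearOrder Q] (lab : List α → α → α → Q)
    (h1 : IsTopolCLLabeling lab) (h2 : SelfConsistent lab) :
    ∃ S : ChainAtomOrdering α, IsGRAO S ⊥ ⊤ [⊥] := by
  exact ⟨GraoAux.graoS lab,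
    GraoAux.isGRAO_of_labeling h1 h2 (Set.Ici (⊥ : α)).ncard ⊥ [⊥] le_rfl
      (GraoAux.satChain_singleton ⊥)⟩
end

section
/- Let λ be a topological CL-labeling of a finite bounded poset P. Then any total order F_1, …, F_k on the maximal chains of P (regarded as the facets of the order complex Δ(P)) that linearly extends the lexicographic order on their label sequences (i.e., if λ(m) is lexicographically strictly smaller than λ(m'), then m comes before m') is a shelling order for the facets of Δ(P). -/
namespace StmtAux

open List

variable {α Q : Type*}

/-- splitting lemma for labelSeq -/
theorem ls_split (lab : List α → α → α → Q) :
    ∀ (X : List α) (r : List α) (x : α) (Y : List α),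
      labelSeq lab r (X ++ x :: Y) =
        labelSeq lab r (X ++ [x]) ++ labelSeq lab (r ++ (X ++ [x]).tail) (x :: Y) := by
  intro X
  induction X with
  | nil => intro r x Y; simp [labelSeq]
  | cons a X' ih =>
      intro r x Y
      cases X' with
      | nil => simp [labelSeq]
      | cons b X'' =>
          have h1 : (a :: b :: X'') ++ x :: Y = a :: ((b :: X'') ++ x :: Y) := by simp
          have h2 : (a :: b :: X'') ++ [x] = a :: ((b :: X'') ++ [x]) := by simp
          rw [h1, h2]
          show lab r a b :: labelSeq lab (r ++ [b]) ((b :: X'') ++ x :: Y)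
              = (lab r a b :: labelSeq lab (r ++ [b]) ((b :: X'') ++ [x]))
                ++ labelSeq lab (r ++ ((a :: b :: X'') ++ [x]).tail) (x :: Y)
          rw [ih (r ++ [b]) x Y]
          simp

theorem ls_length (lab : List α → α → α → Q) :
    ∀ (c r : List α), (labelSeq lab r c).length = c.length - 1 := by
  intro c
  induction c with
  | nil => intro r; simp [labelSeq]
  | cons a c' ih =>
      intro r
      cases c' with
      | nil => simp [labelSeq]
      | cons b c'' =>
          show (lab r a b :: labelSeq lab (r ++ [b]) (b :: c'')).length = _
          simp [ih (r ++ [b])]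

variable [LinearOrder Q]

/-- positional lexicographic comparison -/
def PosLex (s t : List Q) : Prop :=
  ∃ (p : List Q) (a b : Q) (s' t' : List Q), s = p ++ a :: s' ∧ t = p ++ b :: t' ∧ a < b

theorem lex_append_left {s t : List Q} (p : List Q) (h : List.Lex (· < ·) s t) :
    List.Lex (· < ·) (p ++ s) (p ++ t) := by
  induction p with
  | nil => simpa
  | cons a p ih => exact List.Lex.cons ih

theorem posLex_lex_append {s t : List Q} (h : PosLex s t) (e f : List Q) :
    List.Lex (· < ·) (s ++ e) (t ++ f) := by
  obtain ⟨p, a, b, s', t', rfl, rfl, hab⟩ := h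
  have : List.Lex (· < ·) (a :: (s' ++ e)) (b :: (t' ++ f)) := List.Lex.rel hab
  simpa using lex_append_left p this

theorem posLex_lex {s t : List Q} (h : PosLex s t) : List.Lex (· < ·) s t := by
  have := posLex_lex_append h [] []
  simpa using this

theorem lex_irrefl (s : List Q) : ¬ List.Lex (· < ·) s s :=
  (inferInstance : IsIrrefl (List Q) (List.Lex (· < ·))).irrefl s

theorem lex_trans {s t u : List Q} (h1 : List.Lex (· < ·) s t) (h2 : List.Lex (· < ·) t u) :
    List.Lex (· < ·) s u :=
  List.lex_trans lt_trans h1 h2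

theorem lex_cases {s t : List Q} (h : List.Lex (· < ·) s t) :
    PosLex s t ∨ s <+: t := by
  induction h with
  | nil => exact Or.inr ⟨_, rfl⟩
  | @cons a l₁ l₂ h ih =>
      rcases ih with hp | hp
      · obtain ⟨p, x, y, s', t', rfl, rfl, hxy⟩ := hp
        exact Or.inl ⟨a :: p, x, y, s', t', rfl, rfl, hxy⟩
      · exact Or.inr ((List.prefix_cons_inj a).mpr hp)
  | @rel a₁ l₁ a₂ l₂ hr => exact Or.inl ⟨[], a₁, a₂, l₁, l₂, rfl, rfl, hr⟩

/-- extracting next element of a long prefix -/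
theorem prefix_long {s P : List Q} {b : Q} {T : List Q}
    (h : s <+: P ++ b :: T) (hl : P.length < s.length) :
    ∃ t₀, s = P ++ b :: t₀ := by
  have hP : P <+: s := by
    refine List.prefix_of_prefix_length_le (List.prefix_append _ _) h (le_of_lt hl)
  obtain ⟨rest, rfl⟩ := hP
  cases rest with
  | nil => simp at hl
  | cons x rest' =>
      obtain ⟨e, he⟩ := h
      rw [List.append_assoc] at he
      have := List.append_cancel_left he
      rw [List.cons_append] at this
      cases this
      exact ⟨rest', rfl⟩

end StmtAux

namespace StmtAux
open List
section POrder
variable {α : Type*} [PartialOrder α]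

theorem sc_ne_nil {x y : α} {l : List α} (h : SatChain x y l) : l ≠ [] := by
  rintro rfl; simp [SatChain] at h

theorem mem_of_getLast?' {l : List α} {y : α} (h : l.getLast? = some y) : y ∈ l := by
  cases l with
  | nil => simp at h
  | cons a t =>
      rw [List.getLast?_eq_getLast (by simp)] at h
      simp at h
      rw [← h]
      exact List.getLast_mem _

theorem sc_pairwise {x y : α} {l : List α} (h : SatChain x y l) :
    l.Pairwise (· < ·) := by
  have h2 : l.Chain' (· < ·) := List.IsChain.imp (fun _ _ hc => hc.lt) h.1
  exact (List.isChain_iff_pairwise).mp h2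

theorem sc_nodup {x y : α} {l : List α} (h : SatChain x y l) : l.Nodup :=
  List.Pairwise.imp ne_of_lt (sc_pairwise h)

theorem sc_head_mem {x y : α} {l : List α} (h : SatChain x y l) : x ∈ l := by
  cases l with
  | nil => exact absurd rfl (sc_ne_nil h)
  | cons a t =>
      have := h.2.1; simp at this; subst this; simp

theorem sc_last_mem {x y : α} {l : List α} (h : SatChain x y l) : y ∈ l :=
  mem_of_getLast?' h.2.2

theorem sc_le {x y : α} {l : List α} (h : SatChain x y l) : x ≤ y := by
  cases l with
  | nil => exact absurd rfl (sc_ne_nil h)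
  | cons a t =>
      obtain ⟨hc, hh, hl⟩ := h
      simp at hh; subst hh
      cases t with
      | nil => simp at hl; simp [hl]
      | cons b t' =>
          have hy : y ∈ b :: t' := by
            rw [List.getLast?_cons_cons] at hl
            exact mem_of_getLast?' hl
          have hp := sc_pairwise (x := a) (y := y) (l := a :: b :: t')
            ⟨hc, by simp, by rw [List.getLast?_cons_cons]; exact hl⟩
          exact le_of_lt ((List.pairwise_cons.mp hp).1 y hy)

theorem satChain_prefix {x y u : α} {P Y l : List α} (h : SatChain x y l)
    (hl : l = P ++ u :: Y) : SatChain x u (P ++ [u]) := by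
  subst hl
  refine ⟨List.IsChain.prefix h.1 ⟨Y, by simp⟩, ?_, by simp⟩
  have hh := h.2.1
  cases P with
  | nil => simpa using hh
  | cons p P' => simpa using hh

theorem satChain_infix {x y u w : α} {P M S l : List α} (h : SatChain x y l)
    (hl : l = P ++ (u :: M ++ [w]) ++ S) : SatChain u w (u :: M ++ [w]) := by
  subst hl
  refine ⟨List.IsChain.infix h.1 ⟨P, S, by simp⟩, by simp, ?_⟩
  rw [show u :: M ++ [w] = (u :: M) ++ [w] by simp, List.getLast?_append]
  simp

theorem satChain_glue {x u y : α} {r G : List α} (h1 : SatChain x u r)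
    (h2 : SatChain u y (u :: G)) : SatChain x y (r ++ G) := by
  obtain ⟨hc1, hh1, hl1⟩ := h1
  obtain ⟨hc2, hh2, hl2⟩ := h2
  constructor
  · show List.IsChain _ _; rw [List.isChain_append]
    refine ⟨hc1, List.IsChain.tail hc2, ?_⟩
    intro a ha b hb
    rw [hl1] at ha
    cases ha
    have := List.isChain_cons.mp hc2
    exact this.1 b (by simpa using hb)
  constructor
  · rw [List.head?_append, hh1]; rfl
  · cases G with
    | nil => simp at hl2 ⊢; rw [hl1]; simp [hl2]
    | cons g G' =>
        rw [List.getLast?_append]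
        rw [List.getLast?_cons_cons] at hl2
        simp [hl2]

theorem satChain_decomp {x z : α} {l : List α} (h : SatChain x z l) (hne : x ≠ z) :
    ∃ N, l = x :: N ++ [z] := by
  cases l with
  | nil => exact absurd rfl (sc_ne_nil h)
  | cons a t =>
      have hh := h.2.1; simp at hh; subst hh
      cases t with
      | nil =>
          have := h.2.2; simp at this; exact absurd this hne
      | cons b t' =>
          have hl := h.2.2
          rw [List.getLast?_cons_cons] at hl
          have hne2 : (b :: t') ≠ [] := by simp
          have hd := List.dropLast_append_getLast hne2
          rw [List.getLast?_eq_getLast hne2] at hl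
          simp only [Option.some_inj] at hl
          refine ⟨(b :: t').dropLast, ?_⟩
          rw [← hl, show a :: (b :: t').dropLast ++ [(b :: t').getLast hne2]
            = a :: ((b :: t').dropLast ++ [(b :: t').getLast hne2]) from by simp, hd]

theorem satChain_splice {p q x v z : α} {P S N : List α}
    (h : SatChain p q (P ++ x :: v :: z :: S))
    (h2 : SatChain x z (x :: N ++ [z])) :
    SatChain p q (P ++ x :: (N ++ z :: S)) := by
  obtain ⟨hc, hh, hl⟩ := h
  have hcx : List.Chain' (· ⋖ ·) (x :: v :: z :: S) := (List.isChain_append.mp hc).2.1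
  have hczS : List.Chain' (· ⋖ ·) (z :: S) := List.IsChain.tail (List.IsChain.tail hcx)
  have hlast : (x :: N ++ [z]).getLast? = some z := by
    rw [show x :: N ++ [z] = (x :: N) ++ [z] by simp, List.getLast?_append]; simp
  have hcnew : List.Chain' (· ⋖ ·) (x :: (N ++ z :: S)) := by
    have heq : x :: (N ++ z :: S) = (x :: N ++ [z]) ++ S := by simp
    rw [heq]; show List.IsChain _ _; rw [List.isChain_append]
    refine ⟨h2.1, List.IsChain.tail hczS, ?_⟩
    intro a ha b hb
    rw [hlast] at ha
    cases ha
    exact (List.isChain_cons.mp hczS).1 b hb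
  constructor
  · show List.IsChain _ _; rw [List.isChain_append]
    obtain ⟨hP, _, hlink⟩ := List.isChain_append.mp hc
    exact ⟨hP, hcnew, by intro a ha b hb; simp at hb; exact hlink a ha b (by simp [hb])⟩
  constructor
  · cases P with
    | nil => simpa using hh
    | cons pp P' => simpa using hh
  · have hl' : (z :: S).getLast? = some q := by
      rw [show P ++ x :: v :: z :: S = (P ++ [x, v]) ++ z :: S from by simp,
        List.getLast?_append, List.getLast?_eq_getLast (l := z :: S) (by simp)] at hl
      rw [List.getLast?_eq_getLast (l := z :: S) (by simp)]
      simpa using hl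
    rw [show P ++ x :: (N ++ z :: S) = (P ++ x :: N) ++ z :: S from by simp,
      List.getLast?_append, hl']
    rfl
end POrder
end StmtAux

namespace StmtAux
open List
section POrder
variable {α : Type*} [PartialOrder α]

theorem satChain_triple {x v z : α} (hxv : x ⋖ v) (hvz : v ⋖ z) :
    SatChain x z [x, v, z] := by
  refine ⟨?_, by simp, by simp⟩
  simp [List.Chain', List.isChain_cons_cons, hxv, hvz]

/-- if v (with x ⋖ v ⋖ z) lies on a saturated chain from x to z, the chain is [x,v,z] -/
theorem mem_satChain_covby {x v z : α} {l : List α} (h : SatChain x z l)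
    (hxv : x ⋖ v) (hvz : v ⋖ z) (hv : v ∈ l) : l = [x, v, z] := by
  have hxz : x ≠ z := ne_of_lt (hxv.lt.trans hvz.lt)
  obtain ⟨N, rfl⟩ := satChain_decomp h hxz
  have hvx : v ≠ x := ne_of_gt hxv.lt
  have hvz' : v ≠ z := ne_of_lt hvz.lt
  have hvN : v ∈ N := by
    simp at hv
    rcases hv with h1 | h1 | h1
    · exact absurd h1 hvx
    · exact h1
    · exact absurd h1 hvz'
  obtain ⟨N₁, N₂, rfl⟩ := List.append_of_mem hvN
  have hp := sc_pairwise h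
  have hc := h.1
  have hN₁ : N₁ = [] := by
    rcases List.eq_nil_or_concat N₁ with rfl | ⟨M, g, rfl⟩
    · rfl
    exfalso
    simp only [List.concat_eq_append] at h hv hvN hp hc
    have hre : x :: (M ++ [g] ++ v :: N₂) ++ [z]
        = (x :: M ++ [g]) ++ (v :: (N₂ ++ [z])) := by simp
    rw [hre] at hc
    obtain ⟨-, -, hlink⟩ := List.isChain_append.mp hc
    have hgv : g ⋖ v := by
      refine hlink g ?_ v (by simp)
      rw [show x :: M ++ [g] = (x :: M) ++ [g] from by simp, List.getLast?_append]
      simp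
    have hxg : x < g := by
      refine (List.pairwise_cons.mp hp).1 g ?_
      simp
    exact hxv.2 hxg hgv.lt
  subst hN₁
  simp only [List.nil_append] at hc hp ⊢
  cases N₂ with
  | nil => simp
  | cons n N₂' =>
      exfalso
      have hc' : List.Chain' (· ⋖ ·) (x :: v :: n :: (N₂' ++ [z])) := by
        have : x :: (v :: n :: N₂') ++ [z] = x :: v :: n :: (N₂' ++ [z]) := by simp
        rwa [this] at hc
      have hvn : v ⋖ n := (List.isChain_cons_cons.mp (List.isChain_cons_cons.mp hc').2).1
      have hnz : n < z := by
        have hre : x :: (v :: n :: N₂') ++ [z] = (x :: v :: n :: N₂') ++ [z] := by simp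
        rw [hre] at hp
        exact (List.pairwise_append.mp hp).2.2 n (by simp) z (by simp)
      exact hvz.2 hvn.lt hnz

theorem desc_extract {Q : Type*} [LinearOrder Q] (lab : List α → α → α → Q) :
    ∀ (c r : List α), ¬ TopAscending lab r c →
      ∃ D x v z E, c = D ++ x :: v :: z :: E ∧
        ¬ TopAscent lab (r ++ (D ++ [x]).tail) x v z := by
  intro c
  induction c with
  | nil => intro r hr; exact absurd trivial hr
  | cons u c' ih =>
      intro r hr
      match c', hr with
      | [], hr => exact absurd trivial hr
      | [_], hr => exact absurd trivial hr
      | v :: w :: c'', hr =>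
          rw [show TopAscending lab r (u :: v :: w :: c'')
            = (TopAscent lab r u v w ∧ TopAscending lab (r ++ [v]) (v :: w :: c''))
            from rfl] at hr
          rw [not_and_or] at hr
          rcases hr with hr | hr
          · exact ⟨[], u, v, w, c'', by simp, by simpa using hr⟩
          · obtain ⟨D', x', v', z', E', heq, hna⟩ := ih (r ++ [v]) hr
            refine ⟨u :: D', x', v', z', E', by simp [heq], ?_⟩
            have hroot : (r ++ [v]) ++ (D' ++ [x']).tail = r ++ ((u :: D') ++ [x']).tail := by
              cases D' with
              | nil =>
                  simp at heq
                  simp [heq.1]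
              | cons d D'' =>
                  have hd : d = v := by
                    simp at heq
                    exact heq.1.symm
                  subst hd
                  simp
            rwa [hroot] at hna

theorem lcp : ∀ (l : List α) (l' : List α), l ≠ [] → l.head? = l'.head? →
    l <+: l' ∨ l' <+: l ∨
      ∃ A a b ta tb, l = A ++ a :: ta ∧ l' = A ++ b :: tb ∧ a ≠ b ∧ A ≠ [] := by
  intro l
  induction l with
  | nil => intro l' h; exact absurd rfl h
  | cons h t ih =>
      intro l' _ hh
      cases l' with
      | nil => simp at hh
      | cons h' t' =>
          simp at hh
          subst hh
          cases t with
          | nil => exact Or.inl ⟨t', by simp⟩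
          | cons p t₂ =>
              cases t' with
              | nil => exact Or.inr (Or.inl ⟨p :: t₂, by simp⟩)
              | cons q t₂' =>
                  by_cases hpq : p = q
                  · subst hpq
                    rcases ih (p :: t₂') (by simp) (by simp) with h1 | h1 | h1
                    · exact Or.inl (List.cons_prefix_cons.mpr ⟨rfl, h1⟩)
                    · exact Or.inr (Or.inl (List.cons_prefix_cons.mpr ⟨rfl, h1⟩))
                    · obtain ⟨A, a, b, ta, tb, e1, e2, hab, hA⟩ := h1
                      exact Or.inr (Or.inr ⟨h :: A, a, b, ta, tb, by simp [e1], by simp [e2],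
                        hab, by simp⟩)
                  · exact Or.inr (Or.inr ⟨[h], p, q, t₂, t₂', by simp, by simp, hpq, by simp⟩)

theorem first_mem_split (p : α → Prop) :
    ∀ (l : List α), (∃ x ∈ l, p x) →
      ∃ Z w S, l = Z ++ w :: S ∧ p w ∧ ∀ y ∈ Z, ¬ p y := by
  intro l
  induction l with
  | nil => rintro ⟨x, hx, _⟩; simp at hx
  | cons h t ih =>
      intro hex
      by_cases hp : p h
      · exact ⟨[], h, t, by simp, hp, by simp⟩
      · have : ∃ x ∈ t, p x := by
          obtain ⟨x, hx, hpx⟩ := hex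
          rcases List.mem_cons.mp hx with rfl | hx'
          · exact absurd hpx hp
          · exact ⟨x, hx', hpx⟩
        obtain ⟨Z, w, S, he, hw, hZ⟩ := ih this
        refine ⟨h :: Z, w, S, by simp [he], hw, ?_⟩
        intro y hy
        rcases List.mem_cons.mp hy with rfl | hy'
        · exact hp
        · exact hZ y hy'

end POrder
end StmtAux

namespace StmtAux
open List

theorem no_prefix {α Q : Type*} [PartialOrder α] [OrderBot α] [LinearOrder Q] [Fintype α]
    (lab : List α → α → α → Q) (h : IsTopolCLLabeling lab)
    {u w : α} {r : List α} (hr : SatChain (⊥ : α) u r)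
    {c₀ : List α}
    (hlex0 : ∀ c, SatChain u w c → c ≠ c₀ →
      List.Lex (· < ·) (labelSeq lab r c₀) (labelSeq lab r c))
    (hasc0 : ∀ c, SatChain u w c → c ≠ c₀ → ¬ TopAscending lab r c) :
    ∀ c, SatChain u w c → c ≠ c₀ → ¬ (labelSeq lab r c₀ <+: labelSeq lab r c) := by
  classical
  have hfin : ∀ P : List α → Prop, ({l : List α | SatChain u w l ∧ P l}).Finite := by
    intro P
    refine Set.Finite.subset (List.finite_length_le α (Fintype.card α)) ?_
    intro l hl
    exact List.Nodup.length_le_card (sc_nodup hl.1)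
  suffices H : ∀ n (c : List α), SatChain u w c → c ≠ c₀ →
      labelSeq lab r c₀ <+: labelSeq lab r c →
      ({l : List α | SatChain u w l ∧
        List.Lex (· < ·) (labelSeq lab r l) (labelSeq lab r c)}).ncard ≤ n → False by
    intro c hc hne hpre
    exact H _ c hc hne hpre le_rfl
  intro n
  induction n using Nat.strong_induction_on with
  | _ n ih =>
  intro c hc hne hpre hcard
  obtain ⟨D, x, v, z, E, hceq, hnTA⟩ := desc_extract lab c r (hasc0 c hc hne)
  subst hceq
  set ρ : List α := r ++ (D ++ [x]).tail with hρdef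
  have hcx : List.Chain' (· ⋖ ·) (x :: v :: z :: E) := (List.isChain_append.mp hc.1).2.1
  have hxv : x ⋖ v := (List.isChain_cons_cons.mp hcx).1
  have hvz : v ⋖ z := (List.isChain_cons_cons.mp (List.isChain_cons_cons.mp hcx).2).1
  have hxltz : x < z := hxv.lt.trans hvz.lt
  have hρ : SatChain (⊥ : α) x ρ := by
    rw [hρdef]
    cases D with
    | nil =>
        have hx : x = u := by
          have := hc.2.1; simp at this; exact this
        subst hx
        simpa using hr
    | cons d D' =>
        have hd : d = u := by
          have := hc.2.1; simp at this; exact this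
        subst hd
        have hpre' : SatChain d x ((d :: D') ++ [x]) :=
          satChain_prefix (P := d :: D') (Y := v :: z :: E) hc (by simp)
        have := satChain_glue hr (show SatChain d x (d :: (D' ++ [x])) by simpa using hpre')
        simpa using this
  obtain ⟨c₁, hc₁sat, hc₁rest⟩ := h x z ρ hρ (le_of_lt hxltz)
  have hc₁lex := hc₁rest.1
  have hc₁asc := hc₁rest.2
  have htriple : SatChain x z [x, v, z] := satChain_triple hxv hvz
  have hc₁ne : c₁ ≠ [x, v, z] := by
    rintro rfl
    exact hnTA ⟨hxv, hvz, fun cc hcc hnecc => hc₁lex cc hcc hnecc⟩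
  have hlex1 : List.Lex (· < ·) (labelSeq lab ρ c₁) (labelSeq lab ρ [x, v, z]) :=
    hc₁lex [x, v, z] htriple (fun hh => hc₁ne hh.symm)
  obtain ⟨N, hNeq⟩ := satChain_decomp hc₁sat (ne_of_lt hxltz)
  have hNnil : N ≠ [] := by
    rintro rfl
    simp at hNeq
    rw [hNeq] at hc₁sat
    have hxz : x ⋖ z := (List.isChain_cons_cons.mp hc₁sat.1).1
    exact hxz.2 hxv.lt hvz.lt
  have hlen1 : (labelSeq lab ρ c₁).length = N.length + 1 := by
    rw [hNeq, ls_length]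
    simp
  have hlen2 : (labelSeq lab ρ [x, v, z]).length = 2 := by
    rw [ls_length]; rfl
  have hpos : PosLex (labelSeq lab ρ c₁) (labelSeq lab ρ [x, v, z]) := by
    rcases lex_cases hlex1 with hp | hp
    · exact hp
    exfalso
    have hle := hp.length_le
    have hNlen : 1 ≤ N.length := List.length_pos_iff.mpr hNnil
    have heqlen : (labelSeq lab ρ c₁).length = (labelSeq lab ρ [x, v, z]).length := by
      omega
    have := List.IsPrefix.eq_of_length hp heqlen
    rw [this] at hlex1
    exact lex_irrefl _ hlex1
  obtain ⟨p, aa, bb, s', t', hps, hpt, hab⟩ := hpos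
  have hcs : SatChain u w (D ++ x :: (N ++ z :: E)) :=
    satChain_splice hc (hNeq ▸ hc₁sat)
  -- label sequence computations
  have e1 : labelSeq lab r (D ++ x :: v :: z :: E)
      = labelSeq lab r (D ++ [x]) ++
        (labelSeq lab ρ [x, v, z] ++ labelSeq lab (ρ ++ [v, z]) (z :: E)) := by
    rw [ls_split lab D r x (v :: z :: E), ← hρdef]
    congr 1
    exact ls_split lab [x, v] ρ z E
  have e2 : labelSeq lab r (D ++ x :: (N ++ z :: E))
      = labelSeq lab r (D ++ [x]) ++
        (labelSeq lab ρ c₁ ++ labelSeq lab (ρ ++ (N ++ [z])) (z :: E)) := by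
    rw [ls_split lab D r x (N ++ z :: E), ← hρdef]
    congr 1
    rw [show (x :: (N ++ z :: E)) = (x :: N) ++ z :: E from by simp,
      ls_split lab (x :: N) ρ z E]
    rw [hNeq]
    congr 1
  set T₁ := labelSeq lab (ρ ++ (N ++ [z])) (z :: E) with hT₁
  set T₂ := labelSeq lab (ρ ++ [v, z]) (z :: E) with hT₂
  set Pp := labelSeq lab r (D ++ [x]) ++ p with hPp
  have e1' : labelSeq lab r (D ++ x :: v :: z :: E) = Pp ++ bb :: (t' ++ T₂) := by
    rw [e1, hpt, hPp]; simp
  have e2' : labelSeq lab r (D ++ x :: (N ++ z :: E)) = Pp ++ aa :: (s' ++ T₁) := by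
    rw [e2, hps, hPp]; simp
  have hlexcc : List.Lex (· < ·)
      (labelSeq lab r (D ++ x :: (N ++ z :: E)))
      (labelSeq lab r (D ++ x :: v :: z :: E)) := by
    rw [e1', e2']
    exact lex_append_left Pp (List.Lex.rel hab)
  -- compare with c₀
  by_cases hlenc : (labelSeq lab r c₀).length ≤ Pp.length
  · -- recurse
    have hPpp : Pp <+: labelSeq lab r (D ++ x :: v :: z :: E) := ⟨bb :: (t' ++ T₂), e1'.symm⟩
    have hpre2 : labelSeq lab r c₀ <+: labelSeq lab r (D ++ x :: (N ++ z :: E)) := by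
      refine (List.prefix_of_prefix_length_le hpre hPpp hlenc).trans ?_
      exact ⟨aa :: (s' ++ T₁), e2'.symm⟩
    have hcsne : D ++ x :: (N ++ z :: E) ≠ c₀ := by
      intro hEq
      have h1 : (labelSeq lab r c₀).length = Pp.length + (s'.length + T₁.length + 1) := by
        rw [← hEq, e2']; simp
      omega
    have hssub : {l : List α | SatChain u w l ∧
          List.Lex (· < ·) (labelSeq lab r l) (labelSeq lab r (D ++ x :: (N ++ z :: E)))}
        ⊂ {l : List α | SatChain u w l ∧
          List.Lex (· < ·) (labelSeq lab r l) (labelSeq lab r (D ++ x :: v :: z :: E))} := by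
      have hsub : {l : List α | SatChain u w l ∧
          List.Lex (· < ·) (labelSeq lab r l) (labelSeq lab r (D ++ x :: (N ++ z :: E)))}
        ⊆ {l : List α | SatChain u w l ∧
          List.Lex (· < ·) (labelSeq lab r l) (labelSeq lab r (D ++ x :: v :: z :: E))} := by
        intro l hl
        exact ⟨hl.1, lex_trans hl.2 hlexcc⟩
      refine (Set.ssubset_iff_of_subset hsub).mpr ?_
      exact ⟨D ++ x :: (N ++ z :: E), ⟨hcs, hlexcc⟩, fun hmem => lex_irrefl _ hmem.2⟩
    have hlt : ({l : List α | SatChain u w l ∧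
          List.Lex (· < ·) (labelSeq lab r l) (labelSeq lab r (D ++ x :: (N ++ z :: E)))}).ncard
        < ({l : List α | SatChain u w l ∧
          List.Lex (· < ·) (labelSeq lab r l) (labelSeq lab r (D ++ x :: v :: z :: E))}).ncard :=
      Set.ncard_lt_ncard hssub (hfin _)
    exact ih _ (by omega) _ hcs hcsne hpre2 le_rfl
  · -- direct contradiction
    push_neg at hlenc
    obtain ⟨t₀, ht₀⟩ := prefix_long (by rw [← e1']; exact hpre) hlenc
    have hposC : PosLex (labelSeq lab r (D ++ x :: (N ++ z :: E))) (labelSeq lab r c₀) :=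
      ⟨Pp, aa, bb, s' ++ T₁, t₀, e2', ht₀, hab⟩
    have h1 : List.Lex (· < ·) (labelSeq lab r (D ++ x :: (N ++ z :: E))) (labelSeq lab r c₀) :=
      posLex_lex hposC
    by_cases hc0 : D ++ x :: (N ++ z :: E) = c₀
    · rw [hc0] at h1; exact lex_irrefl _ h1
    · exact lex_irrefl _ (lex_trans (hlex0 _ hcs hc0) h1)

end StmtAux

/-- Given a topological CL-labeling of a finite bounded poset, any enumeration of the
maximal chains (the facets of the order complex) that linearly extends the
lexicographic order on their label sequences is a shelling order: for all `i < j`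
there is `l < j` with `F_i ∩ F_j ⊆ F_l ∩ F_j` and `|F_l ∩ F_j| = |F_j| - 1`. -/
theorem stmt_17 {α : Type*} [PartialOrder α] [BoundedOrder α] [Fintype α]
    [DecidableEq α] {Q : Type*} [LinearOrder Q] (lab : List α → α → α → Q)
    (h : IsTopolCLLabeling lab)
    (ms : List (List α))
    (hmem : ∀ c, SatChain (⊥ : α) ⊤ c ↔ c ∈ ms)
    (hnodup : ms.Nodup)
    (hlex : ∀ (i j : Fin ms.length),
      List.Lex (· < ·) (labelSeq lab [⊥] (ms.get i)) (labelSeq lab [⊥] (ms.get j)) →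
      (i : ℕ) < (j : ℕ)) :
    ∀ (i j : Fin ms.length), (i : ℕ) < (j : ℕ) →
      ∃ l : Fin ms.length, (l : ℕ) < (j : ℕ) ∧
        (ms.get i).toFinset ∩ (ms.get j).toFinset ⊆
          (ms.get l).toFinset ∩ (ms.get j).toFinset ∧
        ((ms.get l).toFinset ∩ (ms.get j).toFinset).card =
          (ms.get j).toFinset.card - 1 := by
  classical
  open StmtAux List in
  intro i j hij
  set m := ms.get i with hm
  set m' := ms.get j with hm'
  have hmi : SatChain (⊥ : α) ⊤ m := (hmem m).mpr (by rw [hm]; exact ms.get_mem i)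
  have hmj : SatChain (⊥ : α) ⊤ m' := (hmem m').mpr (by rw [hm']; exact ms.get_mem j)
  have hijne : i ≠ j := by
    intro hEq; rw [hEq] at hij; exact lt_irrefl _ hij
  have hmne : m ≠ m' := by
    intro hEq
    exact hijne ((List.Nodup.get_inj_iff hnodup).mp hEq)
  -- no maximal chain is a prefix of another
  have hnopre : ∀ (l l' : List α), SatChain (⊥ : α) ⊤ l → SatChain (⊥ : α) ⊤ l' →
      l ≠ l' → ¬ l <+: l' := by
    intro l l' h1 h2 hne hp
    obtain ⟨k, hk⟩ := hp
    have hkne : k ≠ [] := by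
      rintro rfl; simp at hk; exact hne hk
    have hlmem : (⊤ : α) ∈ l := sc_last_mem h1
    have hkmem : (⊤ : α) ∈ k := by
      have h3 := h2.2.2
      rw [← hk, List.getLast?_append] at h3
      have h4 : k.getLast? = some (k.getLast hkne) := List.getLast?_eq_getLast hkne
      rw [h4] at h3
      simp at h3
      rw [← h3]
      exact List.getLast_mem hkne
    have hpw := sc_pairwise h2
    rw [← hk] at hpw
    exact lt_irrefl _ ((List.pairwise_append.mp hpw).2.2 ⊤ hlmem ⊤ hkmem)
  -- longest common prefix
  have hhead : m.head? = m'.head? := by rw [hmi.2.1, hmj.2.1]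
  rcases lcp m m' (sc_ne_nil hmi) hhead with hp | hp | ⟨A, a, b, ta, tb, hma, hmb, hab, hAne⟩
  · exact absurd hp (hnopre m m' hmi hmj hmne)
  · exact absurd hp (hnopre m' m hmj hmi (Ne.symm hmne))
  obtain ⟨A', u, hA⟩ : ∃ A' u, A = A' ++ [u] :=
    ⟨A.dropLast, A.getLast hAne, (List.dropLast_append_getLast hAne).symm⟩
  -- head of any nonempty prefix of m or m' is ⊥
  have hheadpref : ∀ (mm X : List α) (x : α) (Y : List α), SatChain (⊥ : α) ⊤ mm →
      mm = X ++ x :: Y → (⊥ : α) :: (X ++ [x]).tail = X ++ [x] := by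
    intro mm X x Y hsat hXY
    have h1 : (X ++ [x]).head? = some ⊥ := by
      have h2 := hsat.2.1
      rw [hXY] at h2
      cases X with
      | nil => simpa using h2
      | cons x0 X' => simpa using h2
    cases X with
    | nil => simp at h1; simp [h1]
    | cons x0 X' => simp at h1; simp [h1]
  -- cover relations above u
  have huca : u ⋖ a := by
    have hch := hmi.1
    rw [hma, hA] at hch
    obtain ⟨-, -, hlink⟩ := List.isChain_append.mp hch
    refine hlink u ?_ a (by simp)
    rw [List.getLast?_append]; simp
  have hucb : u ⋖ b := by
    have hch := hmj.1
    rw [hmb, hA] at hch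
    obtain ⟨-, -, hlink⟩ := List.isChain_append.mp hch
    refine hlink u ?_ b (by simp)
    rw [List.getLast?_append]; simp
  -- b ∉ m
  have hbm : b ∉ m := by
    intro hbmem
    have hbA : b ∉ A := by
      have hnd := sc_nodup hmj
      rw [hmb] at hnd
      exact fun hbA => (List.nodup_append'.mp hnd).2.2 hbA (by simp)
    have hbta : b ∈ ta := by
      rw [hma] at hbmem
      rcases List.mem_append.mp hbmem with h1 | h1
      · exact absurd h1 hbA
      · rcases List.mem_cons.mp h1 with h2 | h2
        · exact absurd h2.symm hab
        · exact h2
    have haltb : a < b := by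
      have hpw := sc_pairwise hmi
      rw [hma] at hpw
      exact (List.pairwise_cons.mp (List.pairwise_append.mp hpw).2.1).1 b hbta
    exact hucb.2 huca.lt haltb
  -- split off zone in m'
  have htopZ : ∃ y ∈ b :: tb, y ∈ m := by
    refine ⟨⊤, ?_, sc_last_mem hmi⟩
    have h3 := hmj.2.2
    rw [hmb, List.getLast?_append] at h3
    have h4 : (b :: tb).getLast? = some ((b :: tb).getLast (by simp)) :=
      List.getLast?_eq_getLast (by simp)
    rw [h4] at h3
    simp at h3
    rw [← h3]
    exact List.getLast_mem _
  obtain ⟨Z, w, S, hzw, hwm, hZ⟩ := first_mem_split (· ∈ m) (b :: tb) htopZ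
  have hZne : Z ≠ [] := by
    rintro rfl
    simp at hzw
    exact hbm (hzw.1 ▸ hwm)
  obtain ⟨Z', rfl⟩ : ∃ Z', Z = b :: Z' := by
    cases Z with
    | nil => exact absurd rfl hZne
    | cons z0 Z0 =>
        have : z0 = b := by
          have := hzw; simp at this; exact this.1.symm
        exact ⟨Z0, by rw [this]⟩
  -- w in m
  have hwA : w ∉ A := by
    intro hwA
    have hnd := sc_nodup hmj
    rw [hmb, hzw] at hnd
    exact (List.nodup_append'.mp hnd).2.2 hwA (by simp)
  obtain ⟨C, S', hcs'⟩ : ∃ C S', a :: ta = C ++ w :: S' := by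
    have hwata : w ∈ a :: ta := by
      have h5 : w ∈ m := hwm
      rw [hma] at h5
      rcases List.mem_append.mp h5 with h6 | h6
      · exact absurd h6 hwA
      · exact h6
    obtain ⟨C, S', hCS⟩ := List.append_of_mem hwata
    exact ⟨C, S', hCS⟩
  have hmdecomp : m = A' ++ (u :: C ++ [w]) ++ S' := by
    rw [hma, hA, hcs']; simp
  have hmdecomp' : m' = A' ++ (u :: (b :: Z') ++ [w]) ++ S := by
    rw [hmb, hA, hzw]; simp
  have hcsat : SatChain u w (u :: C ++ [w]) := satChain_infix hmi hmdecomp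
  have hcsat' : SatChain u w (u :: (b :: Z') ++ [w]) := satChain_infix hmj hmdecomp'
  have hrA : SatChain (⊥ : α) u A := by
    rw [hA]
    exact satChain_prefix (P := A') (Y := C ++ w :: S') hmi (by rw [hmdecomp]; simp)
  have hcne : (u :: C ++ [w]) ≠ (u :: (b :: Z') ++ [w]) := by
    cases C with
    | nil =>
        intro hEq
        have := congrArg List.length hEq
        simp at this
    | cons c0 C' =>
        have hc0 : c0 = a := by
          have := hcs'; simp at this; exact this.1.symm
        intro hEq
        simp at hEq
        exact hab (by rw [← hc0]; exact hEq.1)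
  have huw : u ≤ w := sc_le hcsat
  obtain ⟨c₀, hc₀sat, hc₀lex, hc₀asc⟩ := h u w A hrA huw
  -- label sequence splits at u
  have hmsplit : labelSeq lab [⊥] m
      = labelSeq lab [⊥] (A' ++ [u]) ++
        (labelSeq lab A (u :: C ++ [w]) ++ labelSeq lab (A ++ (C ++ [w])) (w :: S')) := by
    have h1 : m = A' ++ u :: (C ++ w :: S') := by rw [hmdecomp]; simp
    rw [h1, ls_split lab A' [⊥] u (C ++ w :: S')]
    have hroot : ([⊥] : List α) ++ (A' ++ [u]).tail = A := by
      have := hheadpref m A' u (C ++ w :: S') hmi h1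
      rw [show ([⊥] : List α) ++ (A' ++ [u]).tail = (⊥ : α) :: (A' ++ [u]).tail from rfl,
        this, ← hA]
    rw [hroot]
    congr 1
    rw [show u :: (C ++ w :: S') = (u :: C) ++ w :: S' from by simp,
      ls_split lab (u :: C) A w S']
    simp
  have hmsplit' : labelSeq lab [⊥] m'
      = labelSeq lab [⊥] (A' ++ [u]) ++
        (labelSeq lab A (u :: (b :: Z') ++ [w]) ++
          labelSeq lab (A ++ ((b :: Z') ++ [w])) (w :: S)) := by
    have h1 : m' = A' ++ u :: ((b :: Z') ++ w :: S) := by rw [hmdecomp']; simp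
    rw [h1, ls_split lab A' [⊥] u ((b :: Z') ++ w :: S)]
    have hroot : ([⊥] : List α) ++ (A' ++ [u]).tail = A := by
      have := hheadpref m' A' u ((b :: Z') ++ w :: S) hmj h1
      rw [show ([⊥] : List α) ++ (A' ++ [u]).tail = (⊥ : α) :: (A' ++ [u]).tail from rfl,
        this, ← hA]
    rw [hroot]
    congr 1
    rw [show u :: ((b :: Z') ++ w :: S) = (u :: (b :: Z')) ++ w :: S from by simp,
      ls_split lab (u :: (b :: Z')) A w S]
    simp
  by_cases hcc : (u :: (b :: Z') ++ [w]) = c₀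
  · -- the zone chain of m' is lexicographically first: contradiction with i < j
    exfalso
    have hc₀ne : (u :: C ++ [w]) ≠ c₀ := by rw [← hcc]; exact hcne
    have hlexcw : List.Lex (· < ·) (labelSeq lab A (u :: (b :: Z') ++ [w]))
        (labelSeq lab A (u :: C ++ [w])) := by
      rw [hcc]
      exact hc₀lex _ hcsat hc₀ne
    rcases lex_cases hlexcw with hpos | hpref
    · obtain ⟨p, aa, bb, s', t', hts, htt, habb⟩ := hpos
      have hLex : List.Lex (· < ·) (labelSeq lab [⊥] m') (labelSeq lab [⊥] m) := by
        rw [hmsplit, hmsplit']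
        apply lex_append_left
        rw [hts, htt]
        rw [show (p ++ aa :: s') ++ labelSeq lab (A ++ ((b :: Z') ++ [w])) (w :: S)
          = (p ++ aa :: s') ++ labelSeq lab (A ++ ((b :: Z') ++ [w])) (w :: S) from rfl]
        exact posLex_lex_append ⟨p, aa, bb, s', t', rfl, rfl, habb⟩ _ _
      have := hlex j i hLex
      omega
    · have hnp := no_prefix lab h hrA hc₀lex hc₀asc
      rw [hcc] at hpref
      exact hnp _ hcsat hc₀ne hpref
  · -- the zone chain of m' has a topological descent
    have hnaZ : ¬ TopAscending lab A (u :: (b :: Z') ++ [w]) := hc₀asc _ hcsat' hcc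
    obtain ⟨D, x, v, z, E, hdeq, hnTA⟩ := desc_extract lab (u :: (b :: Z') ++ [w]) A hnaZ
    have hchZ : List.Chain' (· ⋖ ·) (D ++ x :: v :: z :: E) := by
      rw [← hdeq]; exact hcsat'.1
    have hcx : List.Chain' (· ⋖ ·) (x :: v :: z :: E) := (List.isChain_append.mp hchZ).2.1
    have hxv : x ⋖ v := (List.isChain_cons_cons.mp hcx).1
    have hvz : v ⋖ z := (List.isChain_cons_cons.mp (List.isChain_cons_cons.mp hcx).2).1
    have hxltz : x < z := hxv.lt.trans hvz.lt
    have hρeq : A ++ (D ++ [x]).tail = (A' ++ D) ++ [x] := by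
      cases D with
      | nil =>
          have hux : u = x := by
            have := congrArg List.head? hdeq; simpa using this
          rw [hA, hux]; simp
      | cons d D₂ =>
          have hdu : u = d := by
            have := congrArg List.head? hdeq; simpa using this
          rw [hA, hdu]; simp
    rw [hρeq] at hnTA
    have hm'2 : m' = (A' ++ D) ++ x :: v :: z :: (E ++ S) := by
      rw [hmdecomp', hdeq]; simp
    have hρ'sat : SatChain (⊥ : α) x ((A' ++ D) ++ [x]) :=
      satChain_prefix (P := A' ++ D) (Y := v :: z :: (E ++ S)) hmj (by rw [hm'2])
    obtain ⟨c₁, hc₁sat, hc₁lex, hc₁asc⟩ := h x z ((A' ++ D) ++ [x]) hρ'sat (le_of_lt hxltz)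
    have htriple : SatChain x z [x, v, z] := satChain_triple hxv hvz
    have hc₁ne : c₁ ≠ [x, v, z] := by
      rintro rfl
      exact hnTA ⟨hxv, hvz, fun cc hcc2 hnecc => hc₁lex cc hcc2 hnecc⟩
    have hlex1 : List.Lex (· < ·) (labelSeq lab ((A' ++ D) ++ [x]) c₁)
        (labelSeq lab ((A' ++ D) ++ [x]) [x, v, z]) :=
      hc₁lex [x, v, z] htriple (fun hh => hc₁ne hh.symm)
    obtain ⟨N, hNeq⟩ := satChain_decomp hc₁sat (ne_of_lt hxltz)
    have hNnil : N ≠ [] := by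
      rintro rfl
      simp at hNeq
      rw [hNeq] at hc₁sat
      have hxz : x ⋖ z := (List.isChain_cons_cons.mp hc₁sat.1).1
      exact hxz.2 hxv.lt hvz.lt
    have hpos : PosLex (labelSeq lab ((A' ++ D) ++ [x]) c₁)
        (labelSeq lab ((A' ++ D) ++ [x]) [x, v, z]) := by
      rcases lex_cases hlex1 with hp | hp
      · exact hp
      exfalso
      have hle := hp.length_le
      have hlen1 : (labelSeq lab ((A' ++ D) ++ [x]) c₁).length = N.length + 1 := by
        rw [hNeq, ls_length]; simp
      have hlen2 : (labelSeq lab ((A' ++ D) ++ [x]) [x, v, z]).length = 2 := by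
        rw [ls_length]; rfl
      have hNlen : 1 ≤ N.length := List.length_pos_iff.mpr hNnil
      have heqlen : (labelSeq lab ((A' ++ D) ++ [x]) c₁).length
          = (labelSeq lab ((A' ++ D) ++ [x]) [x, v, z]).length := by omega
      have := List.IsPrefix.eq_of_length hp heqlen
      rw [this] at hlex1
      exact lex_irrefl _ hlex1
    obtain ⟨p, aa, bb, s', t', hps, hpt, habb⟩ := hpos
    -- the new maximal chain
    have hm''sat : SatChain (⊥ : α) ⊤ ((A' ++ D) ++ x :: (N ++ z :: (E ++ S))) := by
      refine satChain_splice (v := v) ?_ (hNeq ▸ hc₁sat)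
      rw [← hm'2]; exact hmj
    obtain ⟨l, hlval⟩ : ∃ l : Fin ms.length,
        ms.get l = (A' ++ D) ++ x :: (N ++ z :: (E ++ S)) := by
      have := (hmem _).mp hm''sat
      obtain ⟨k, hk⟩ := List.mem_iff_get.mp this
      exact ⟨k, hk⟩
    -- label sequence comparison
    have hroot2 : ([⊥] : List α) ++ ((A' ++ D) ++ [x]).tail = (A' ++ D) ++ [x] := by
      have := hheadpref m' (A' ++ D) x (v :: z :: (E ++ S)) hmj (by rw [hm'2])
      rw [show ([⊥] : List α) ++ ((A' ++ D) ++ [x]).tail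
        = (⊥ : α) :: ((A' ++ D) ++ [x]).tail from rfl, this]
    have hsplitj : labelSeq lab [⊥] m'
        = labelSeq lab [⊥] ((A' ++ D) ++ [x]) ++
          (labelSeq lab ((A' ++ D) ++ [x]) [x, v, z] ++
            labelSeq lab ((A' ++ D) ++ [x] ++ [v, z]) (z :: (E ++ S))) := by
      rw [hm'2, ls_split lab (A' ++ D) [⊥] x (v :: z :: (E ++ S)), hroot2]
      congr 1
      exact ls_split lab [x, v] ((A' ++ D) ++ [x]) z (E ++ S)
    have hsplitl : labelSeq lab [⊥] ((A' ++ D) ++ x :: (N ++ z :: (E ++ S)))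
        = labelSeq lab [⊥] ((A' ++ D) ++ [x]) ++
          (labelSeq lab ((A' ++ D) ++ [x]) c₁ ++
            labelSeq lab ((A' ++ D) ++ [x] ++ (N ++ [z])) (z :: (E ++ S))) := by
      rw [ls_split lab (A' ++ D) [⊥] x (N ++ z :: (E ++ S)), hroot2]
      congr 1
      rw [show x :: (N ++ z :: (E ++ S)) = (x :: N) ++ z :: (E ++ S) from by simp,
        ls_split lab (x :: N) ((A' ++ D) ++ [x]) z (E ++ S), hNeq]
      congr 1
    have hLex2 : List.Lex (· < ·)
        (labelSeq lab [⊥] ((A' ++ D) ++ x :: (N ++ z :: (E ++ S))))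
        (labelSeq lab [⊥] m') := by
      rw [hsplitj, hsplitl]
      apply lex_append_left
      rw [hps, hpt]
      exact posLex_lex_append ⟨p, aa, bb, s', t', rfl, rfl, habb⟩ _ _
    have hlj : (l : ℕ) < (j : ℕ) := by
      refine hlex l j ?_
      rw [hlval]
      exact hLex2
    -- v is in the zone: v ∉ m
    have hndZ : (u :: (b :: Z') ++ [w]).Nodup := sc_nodup hcsat'
    have hvmem' : v ∈ u :: (b :: Z') ++ [w] := by
      rw [hdeq]; simp
    have hvneu : v ≠ u := by
      intro hvu
      cases D with
      | nil =>
          have hux : u = x := by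
            have := congrArg List.head? hdeq; simpa using this
          rw [hvu, hux] at hxv
          exact lt_irrefl x hxv.lt
      | cons d D₂ =>
          have hdu : u = d := by
            have := congrArg List.head? hdeq; simpa using this
          have hnd2 : (d :: D₂ ++ x :: v :: z :: E).Nodup := by rw [← hdeq]; exact hndZ
          have := (List.nodup_append'.mp hnd2).2.2 (show u ∈ d :: D₂ by simp [hdu])
            (show u ∈ x :: v :: z :: E by rw [← hvu]; simp)
          exact this
    have hvnew : v ≠ w := by
      intro hvw
      have hlw : (D ++ x :: v :: z :: E).getLast? = some w := by
        rw [← hdeq]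
        exact hcsat'.2.2
      rcases List.eq_nil_or_concat E with rfl | ⟨E₂, e, rfl⟩
      · have hzw2 : z = w := by
          rw [List.getLast?_append] at hlw
          simp at hlw
          exact hlw
        exact absurd hvz.lt (by rw [hvw, hzw2]; exact lt_irrefl w)
      · simp only [List.concat_eq_append] at hlw hdeq
        have hew : e = w := by
          rw [List.getLast?_append] at hlw
          rw [show (x :: v :: z :: (E₂ ++ [e])).getLast?
            = some e from by rw [show x :: v :: z :: (E₂ ++ [e])
              = (x :: v :: z :: E₂) ++ [e] from by simp, List.getLast?_append]; simp] at hlw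
          simp at hlw
          exact hlw
        have hnd2 : (D ++ x :: v :: z :: (E₂ ++ [e])).Nodup := by rw [← hdeq]; exact hndZ
        have hnd3 : (x :: v :: z :: (E₂ ++ [e])).Nodup := (List.nodup_append'.mp hnd2).2.1
        have hvnine : v ∉ z :: (E₂ ++ [e]) := (List.nodup_cons.mp (List.nodup_cons.mp hnd3).2).1
        refine hvnine ?_
        rw [hvw, ← hew]
        simp
    have hvZ : v ∈ (b :: Z') := by
      have := hvmem'
      simp at this
      rcases this with h1 | h1 | h1 | h1
      · exact absurd h1 hvneu
      · simp [h1]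
      · simp [h1]
      · exact absurd h1 hvnew
    have hvm : v ∉ m := hZ v hvZ
    -- v not on the new chain
    have hndm' : ((A' ++ D) ++ x :: v :: z :: (E ++ S)).Nodup := by
      rw [← hm'2]; exact sc_nodup hmj
    have hvAD : v ∉ A' ++ D :=
      fun hvAD => (List.nodup_append'.mp hndm').2.2 hvAD (by simp)
    have hndR : (x :: v :: z :: (E ++ S)).Nodup := (List.nodup_append'.mp hndm').2.1
    have hvnotES : v ∉ E ++ S := by
      have := (List.nodup_cons.mp (List.nodup_cons.mp hndR).2).1
      intro hvES
      exact this (by simp [hvES])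
    have hvnotz : v ≠ z := ne_of_lt hvz.lt
    have hvnotx : v ≠ x := ne_of_gt hxv.lt
    have hvN : v ∉ N := by
      intro hvN
      refine hc₁ne (mem_satChain_covby hc₁sat hxv hvz ?_)
      rw [hNeq]; simp [hvN]
    have hvm'' : v ∉ (A' ++ D) ++ x :: (N ++ z :: (E ++ S)) := by
      intro hvm2
      rcases List.mem_append.mp hvm2 with h1 | h1
      · exact hvAD h1
      rcases List.mem_cons.mp h1 with h2 | h2
      · exact hvnotx h2
      rcases List.mem_append.mp h2 with h3 | h3
      · exact hvN h3
      rcases List.mem_cons.mp h3 with h4 | h4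
      · exact hvnotz h4
      · exact hvnotES h4
    -- membership transfer
    have hsub2 : ∀ y, y ∈ m' → y ≠ v → y ∈ (A' ++ D) ++ x :: (N ++ z :: (E ++ S)) := by
      intro y hym hyv
      rw [hm'2] at hym
      rcases List.mem_append.mp hym with h1 | h1
      · exact List.mem_append.mpr (Or.inl h1)
      rcases List.mem_cons.mp h1 with h2 | h2
      · simp [h2]
      rcases List.mem_cons.mp h2 with h3 | h3
      · exact absurd h3 hyv
      rcases List.mem_cons.mp h3 with h4 | h4
      · simp [h4]
      · simp [h4]
    refine ⟨l, hlj, ?_, ?_⟩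
    · intro y hy
      rw [Finset.mem_inter] at hy ⊢
      rw [hlval]
      obtain ⟨hy1, hy2⟩ := hy
      rw [List.mem_toFinset] at hy1 hy2
      refine ⟨?_, by rw [List.mem_toFinset]; exact hy2⟩
      rw [List.mem_toFinset]
      refine hsub2 y hy2 ?_
      intro hyv
      exact hvm (hyv ▸ hy1)
    · rw [hlval]
      have hset : ((A' ++ D) ++ x :: (N ++ z :: (E ++ S))).toFinset ∩ m'.toFinset
          = m'.toFinset.erase v := by
        ext y
        rw [Finset.mem_inter, Finset.mem_erase, List.mem_toFinset, List.mem_toFinset]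
        constructor
        · rintro ⟨hy1, hy2⟩
          refine ⟨?_, hy2⟩
          intro hyv
          exact hvm'' (hyv ▸ hy1)
        · rintro ⟨hy1, hy2⟩
          exact ⟨hsub2 y hy2 hy1, hy2⟩
      rw [hset]
      refine Finset.card_erase_of_mem ?_
      rw [List.mem_toFinset, hm'2]
      simp
end
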